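/- arXiv:2112.09781 — 7 statements merged into one kernel-verified Lean document; each statement's English description precedes it below -/
import Mathlib

section
/- Let J be a finite-dimensional real Jordan algebra. Then the bilinear form τ is associative: τ(x∘y, z) = τ(x, y∘z) for all x, y, z ∈ J; equivalently, tr(L_{(x∘y)∘z}) = tr(L_{x∘(y∘z)}). -/
/-- for a finite-dimensional real Jordan algebra, the trace form
`τ(x,y) = tr(L_{x∘y})` is associative: `τ(x∘y, z) = τ(x, y∘z)`. -/
theorem stmt4 (J : Type*) [AddCommGroup J] [Module ℝ J] [FiniteDimensional ℝ J]
    (jmul : J →ₗ[ℝ] J →ₗ[ℝ] J)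
    (hcomm : ∀ x y : J, jmul x y = jmul y x)
    (hjordan : ∀ x y : J, jmul (jmul x y) (jmul x x) = jmul x (jmul y (jmul x x))) :
    ∀ x y z : J,
      LinearMap.trace ℝ J (jmul (jmul (jmul x y) z)) =
        LinearMap.trace ℝ J (jmul (jmul x (jmul y z))) := by
  -- operator form of the Jordan identity
  have hP : ∀ x y : J, jmul (jmul x x) (jmul x y) = jmul x (jmul (jmul x x) y) := by
    intro x y
    have h := hjordan x y
    rw [hcomm (jmul x y) (jmul x x)] at h
    rw [hcomm y (jmul x x)] at h
    exact h
  -- first linearization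
  have hQ : ∀ x u y : J, jmul (jmul x x) (jmul u y) + (2:ℝ) • jmul (jmul x u) (jmul x y)
      = jmul u (jmul (jmul x x) y) + (2:ℝ) • jmul x (jmul (jmul x u) y) := by
    intro x u y
    have A := hP (x + u) y
    have B := hP (x - u) y
    have C := hP u y
    simp only [map_add, map_sub, LinearMap.add_apply, LinearMap.sub_apply, hcomm u x] at A B
    linear_combination (norm := module) ((2:ℝ)⁻¹) • A - ((2:ℝ)⁻¹) • B - C
  -- full linearization
  have hR : ∀ x z u y : J,
      jmul (jmul x z) (jmul u y) + jmul (jmul x u) (jmul z y) + jmul (jmul z u) (jmul x y)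
      = jmul u (jmul (jmul x z) y) + jmul x (jmul (jmul z u) y) + jmul z (jmul (jmul x u) y) := by
    intro x z u y
    have A := hQ (x + z) u y
    have B := hQ x u y
    have C := hQ z u y
    simp only [map_add, LinearMap.add_apply, hcomm z x] at A
    linear_combination (norm := module) ((2:ℝ)⁻¹) • A - ((2:ℝ)⁻¹) • B - ((2:ℝ)⁻¹) • C
  -- operator identity for L_{(a∘b)∘c}
  have hT : ∀ a b c : J,
      (jmul (jmul (jmul a b) c) : Module.End ℝ J)
        = jmul (jmul b c) * jmul a + jmul (jmul a c) * jmul b + jmul (jmul a b) * jmul c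
          - jmul b * jmul c * jmul a - jmul a * jmul c * jmul b := by
    intro a b c
    apply LinearMap.ext
    intro w
    have h := hR w a b c
    simp only [LinearMap.sub_apply, LinearMap.add_apply, Module.End.mul_apply]
    have e1 : jmul (jmul w a) (jmul b c) = jmul (jmul b c) (jmul a w) := by
      rw [hcomm w a, hcomm (jmul a w) (jmul b c)]
    have e2 : jmul (jmul w b) (jmul a c) = jmul (jmul a c) (jmul b w) := by
      rw [hcomm w b, hcomm (jmul b w) (jmul a c)]
    have e3 : jmul (jmul a b) (jmul w c) = jmul (jmul a b) (jmul c w) := by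
      rw [hcomm w c]
    have e4 : jmul b (jmul (jmul w a) c) = jmul b (jmul c (jmul a w)) := by
      rw [hcomm w a, hcomm (jmul a w) c]
    have e5 : jmul w (jmul (jmul a b) c) = jmul (jmul (jmul a b) c) w := hcomm _ _
    have e6 : jmul a (jmul (jmul w b) c) = jmul a (jmul c (jmul b w)) := by
      rw [hcomm w b, hcomm (jmul b w) c]
    rw [e1, e2, e3, e4, e5, e6] at h
    linear_combination (norm := module) -h
  intro x y z
  rw [hcomm x (jmul y z)]
  rw [hT x y z, hT y z x]
  simp only [map_add, map_sub]
  have c1 : LinearMap.trace ℝ J (jmul y * jmul z * jmul x)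
      = LinearMap.trace ℝ J (jmul z * jmul x * jmul y) := by
    rw [mul_assoc, LinearMap.trace_mul_comm]
  have c2 : LinearMap.trace ℝ J (jmul x * jmul z * jmul y)
      = LinearMap.trace ℝ J (jmul y * jmul x * jmul z) := by
    rw [LinearMap.trace_mul_comm, mul_assoc]
  rw [hcomm z x, hcomm y x, c1, c2]
  ring
end

section
/- Let J be a finite-dimensional, unital, positive real Jordan algebra and (c₁,…,c_r) a Jordan frame of J. Then J is the internal direct sum of the Peirce spaces J_{ij} for 1 ≤ i ≤ j ≤ r: every x ∈ J can be written uniquely as x = Σ_{1≤i≤j≤r} x_{ij} with x_{ij} ∈ J_{ij}. -/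
open Finset

section JordanPrelim

variable {J : Type*} [AddCommGroup J] [Module ℝ J]

/-- `c` is an idempotent: `c∘c = c`. -/
def IsIdem (jmul : J →ₗ[ℝ] J →ₗ[ℝ] J) (c : J) : Prop := jmul c c = c

/-- A nonzero idempotent is primitive if it is not the sum of two nonzero idempotents. -/
def IsPrimitive (jmul : J →ₗ[ℝ] J →ₗ[ℝ] J) (c : J) : Prop :=
  IsIdem jmul c ∧ c ≠ 0 ∧
    ¬ ∃ d e : J, IsIdem jmul d ∧ IsIdem jmul e ∧ d ≠ 0 ∧ e ≠ 0 ∧ c = d + e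

/-- `(c 1, …, c r)` is a Jordan frame: pairwise orthogonal primitive idempotents
summing to the unit. -/
def IsJordanFrame (jmul : J →ₗ[ℝ] J →ₗ[ℝ] J) (one : J) {r : ℕ} (c : Fin r → J) : Prop :=
  (∀ i, IsPrimitive jmul (c i)) ∧
  (∀ i j, i ≠ j → jmul (c i) (c j) = 0) ∧
  (∑ i, c i) = one

/-- The Peirce space `J_{ij} = {x | c_k ∘ x = ½(δ_{ki} + δ_{kj}) x for all k}`. -/
noncomputable def Peirce (jmul : J →ₗ[ℝ] J →ₗ[ℝ] J) {r : ℕ} (c : Fin r → J) (i j : Fin r) :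
    Submodule ℝ J :=
  ⨅ k : Fin r, LinearMap.ker
    (jmul (c k) -
      (((if k = i then (1 : ℝ) else 0) + (if k = j then 1 else 0)) / 2) • LinearMap.id)

/-- The trace form `τ(x,y) = tr L_{x∘y}`. -/
noncomputable def tauF (jmul : J →ₗ[ℝ] J →ₗ[ℝ] J) (x y : J) : ℝ :=
  LinearMap.trace ℝ J (jmul (jmul x y))

end JordanPrelim

section PeirceAux

private noncomputable def vaF : Fin 3 → ℝ
  | 0 => 0
  | 1 => 1/2
  | 2 => 1

private noncomputable def epF : Fin 3 → ℝ → ℝ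
  | 0 => fun u => 1 + 2*(u*u) - 3*u
  | 1 => fun u => 4*u - 4*(u*u)
  | 2 => fun u => 2*(u*u) - u

private lemma fin3_cases : ∀ a : Fin 3, a = 0 ∨ a = 1 ∨ a = 2 := by decide

private lemma epF_delta (a b : Fin 3) : epF a (vaF b) = if a = b then 1 else 0 := by
  rcases fin3_cases a with rfl|rfl|rfl <;> rcases fin3_cases b with rfl|rfl|rfl <;>
    simp only [epF, vaF, Fin.reduceEq, reduceIte, if_true, if_false] <;> norm_num

private def laF {r : ℕ} (p : {p : Fin r × Fin r // p.1 ≤ p.2}) (k : Fin r) : Fin 3 :=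
  if k = p.1.1 ∧ k = p.1.2 then 2 else if k = p.1.1 ∨ k = p.1.2 then 1 else 0

private lemma vaF_laF {r : ℕ} (p : {p : Fin r × Fin r // p.1 ≤ p.2}) (k : Fin r) :
    ((if k = p.1.1 then (1:ℝ) else 0) + (if k = p.1.2 then 1 else 0))/2 = vaF (laF p k) := by
  obtain ⟨⟨i, j⟩, hij⟩ := p
  simp only [laF]
  split_ifs <;> first | (exfalso; tauto) | (norm_num [vaF])

private lemma laF_ne_zero {r : ℕ} (p : {p : Fin r × Fin r // p.1 ≤ p.2}) (k : Fin r) :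
    laF p k ≠ 0 ↔ (k = p.1.1 ∨ k = p.1.2) := by
  obtain ⟨⟨i, j⟩, hij⟩ := p
  simp only [laF]
  split_ifs with h1 h2
  · exact iff_of_true (by decide) (Or.inl h1.1)
  · exact iff_of_true (by decide) h2
  · exact iff_of_false (fun hcon => hcon rfl) h2

private lemma laF_inj {r : ℕ} : Function.Injective (laF (r := r)) := by
  rintro ⟨⟨i, j⟩, hij⟩ ⟨⟨i', j'⟩, hij'⟩ h
  have mem1 : ∀ k : Fin r, (k = i ∨ k = j) ↔ (k = i' ∨ k = j') := by
    intro k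
    rw [← laF_ne_zero ⟨(i, j), hij⟩ k, ← laF_ne_zero ⟨(i', j'), hij'⟩ k, h]
  have H1 := (mem1 i).mp (Or.inl rfl)
  have H2 := (mem1 j).mp (Or.inr rfl)
  have H3 := (mem1 i').mpr (Or.inl rfl)
  have H4 := (mem1 j').mpr (Or.inr rfl)
  have hij1 : i.val ≤ j.val := hij
  have hij2 : i'.val ≤ j'.val := hij'
  simp only [Fin.ext_iff] at H1 H2 H3 H4
  apply Subtype.ext
  simp only
  have : i.val = i'.val ∧ j.val = j'.val := by omega
  exact Prod.ext (Fin.ext this.1) (Fin.ext this.2)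

private lemma laF_surj {r : ℕ} (lam : Fin r → Fin 3) (h : ∑ k, vaF (lam k) = 1) :
    ∃ p, lam = laF (r := r) p := by
  classical
  have hva : ∀ k, vaF (lam k)
      = (if lam k = 2 then (1:ℝ) else 0) + (1/2) * (if lam k = 1 then (1:ℝ) else 0) := by
    intro k
    rcases fin3_cases (lam k) with h'|h'|h' <;> rw [h']
    · rw [if_neg (by decide), if_neg (by decide)]; norm_num [vaF]
    · rw [if_neg (by decide), if_pos rfl]; norm_num [vaF]
    · rw [if_pos rfl, if_neg (by decide)]; norm_num [vaF]
  have hsum2 : ∑ k, vaF (lam k)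
      = ((univ.filter (fun k => lam k = 2)).card : ℝ)
        + (1/2) * ((univ.filter (fun k => lam k = 1)).card : ℝ) := by
    rw [Finset.sum_congr rfl (fun k _ => hva k), Finset.sum_add_distrib,
      Finset.sum_boole, ← Finset.mul_sum, Finset.sum_boole]
  rw [hsum2] at h
  have hnat : 2 * (univ.filter (fun k => lam k = 2)).card
      + (univ.filter (fun k => lam k = 1)).card = 2 := by
    have : ((2 * (univ.filter (fun k => lam k = 2)).card
        + (univ.filter (fun k => lam k = 1)).card : ℕ) : ℝ) = 2 := by push_cast; linarith
    exact_mod_cast this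
  have hne : ∀ k, lam k ≠ 2 → lam k ≠ 1 → lam k = 0 := by
    intro k hk2 hk1
    rcases fin3_cases (lam k) with h'|h'|h'
    · exact h'
    · exact absurd h' hk1
    · exact absurd h' hk2
  rcases (by omega : (univ.filter (fun k => lam k = 2)).card = 1
        ∧ (univ.filter (fun k => lam k = 1)).card = 0
      ∨ (univ.filter (fun k => lam k = 2)).card = 0
        ∧ (univ.filter (fun k => lam k = 1)).card = 2) with ⟨hA1, hB0⟩|⟨hA0, hB2⟩
  · obtain ⟨i, hi⟩ := Finset.card_eq_one.mp hA1
    refine ⟨⟨(i, i), le_refl i⟩, funext fun k => ?_⟩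
    by_cases hk : k = i
    · subst hk
      have hmem : k ∈ univ.filter (fun k => lam k = 2) := by
        rw [hi]; exact mem_singleton_self k
      rw [mem_filter] at hmem
      rw [hmem.2]
      simp [laF]
    · have hkA : lam k ≠ 2 := by
        intro hc
        have : k ∈ univ.filter (fun k => lam k = 2) := by simp [hc]
        rw [hi, Finset.mem_singleton] at this
        exact hk this
      have hkB : lam k ≠ 1 := by
        intro hc
        have : k ∈ univ.filter (fun k => lam k = 1) := by simp [hc]
        rw [Finset.card_eq_zero.mp hB0] at this
        exact notMem_empty k this
      rw [hne k hkA hkB]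
      simp [laF, hk]
  · obtain ⟨a, b, hlt, hB2'⟩ : ∃ a b, a < b ∧ univ.filter (fun k => lam k = 1) = {a, b} := by
      obtain ⟨a, b, hab, h2⟩ := Finset.card_eq_two.mp hB2
      rcases lt_or_gt_of_ne hab with hl|hl
      · exact ⟨a, b, hl, h2⟩
      · exact ⟨b, a, hl, by rw [h2, Finset.pair_comm]⟩
    refine ⟨⟨(a, b), le_of_lt hlt⟩, funext fun k => ?_⟩
    by_cases hk : k = a ∨ k = b
    · have hkB : k ∈ univ.filter (fun k => lam k = 1) := by
        rw [hB2']
        rcases hk with rfl|rfl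
        · exact Finset.mem_insert_self _ _
        · exact Finset.mem_insert_of_mem (Finset.mem_singleton_self _)
      rw [mem_filter] at hkB
      rw [hkB.2]
      have hne' : ¬ (k = a ∧ k = b) := by
        rintro ⟨rfl, rfl⟩; exact absurd rfl hlt.ne
      simp [laF, hne', hk]
    · push_neg at hk
      have hkA : lam k ≠ 2 := by
        intro hc
        have : k ∈ univ.filter (fun k => lam k = 2) := by simp [hc]
        rw [Finset.card_eq_zero.mp hA0] at this
        exact notMem_empty k this
      have hkB : lam k ≠ 1 := by
        intro hc
        have : k ∈ univ.filter (fun k => lam k = 1) := by simp [hc]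
        rw [hB2'] at this
        simp [hk.1, hk.2] at this
      rw [hne k hkA hkB]
      simp [laF, hk.1, hk.2]

end PeirceAux

set_option maxHeartbeats 1000000 in
set_option synthInstance.maxHeartbeats 400000 in
/-- a finite-dimensional, unital, positive real Jordan algebra is the
internal direct sum of the Peirce spaces `J_{ij}`, `i ≤ j`, of any Jordan frame:
every `x` is uniquely a sum of components `x_{ij} ∈ J_{ij}`. -/
theorem stmt5 (J : Type*) [AddCommGroup J] [Module ℝ J] [FiniteDimensional ℝ J]
    (jmul : J →ₗ[ℝ] J →ₗ[ℝ] J)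
    (hcomm : ∀ x y : J, jmul x y = jmul y x)
    (hjordan : ∀ x y : J, jmul (jmul x y) (jmul x x) = jmul x (jmul y (jmul x x)))
    (one : J) (hone : ∀ x : J, jmul one x = x)
    (hpos : ∀ x : J, x ≠ 0 → 0 < tauF jmul x x)
    (r : ℕ) (c : Fin r → J) (hframe : IsJordanFrame jmul one c) :
    ∀ x : J, ∃! f : {p : Fin r × Fin r // p.1 ≤ p.2} → J,
      (∀ p, f p ∈ Peirce jmul c p.1.1 p.1.2) ∧ (∑ p, f p) = x := by

  classical
  obtain ⟨hprim, horth, hsum⟩ := hframe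
  have hidem : ∀ k, jmul (c k) (c k) = c k := fun k => (hprim k).1
  -- linearized Jordan identity
  have hlin : ∀ x z w : J,
      (2:ℝ) • (jmul x (jmul w (jmul x z)) - jmul (jmul x w) (jmul x z))
        = jmul (jmul z w) (jmul x x) - jmul z (jmul w (jmul x x)) := by
    intro x z w
    have h1 := hjordan (x + z) w
    have h2 := hjordan (x - z) w
    have h3 := hjordan z w
    have hzx : jmul z x = jmul x z := hcomm z x
    simp only [map_add, map_sub, LinearMap.add_apply, LinearMap.sub_apply, hzx] at h1 h2
    linear_combination (norm := module) (-(1/2) : ℝ) • h1 + (1/2 : ℝ) • h2 + h3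
  -- the multiplication operators
  set L : Fin r → Module.End ℝ J := fun k => jmul (c k) with hL
  have hLcomm : ∀ k m (w : J), jmul (c k) (jmul (c m) w) = jmul (c m) (jmul (c k) w) := by
    intro k m w
    rcases eq_or_ne k m with rfl | hkm
    · rfl
    · have h := hlin (c k) (c m) w
      rw [horth k m hkm, hidem k] at h
      simp only [map_zero, LinearMap.zero_apply, sub_zero, smul_zero] at h
      rw [hcomm (c k) (jmul (c m) w), hcomm (c k) w]
      exact sub_eq_zero.mp h.symm
  -- cubic relation for idempotents, as endomorphisms
  have hcubE : ∀ k, (2:ℝ) • (L k * L k * L k) = (3:ℝ) • (L k * L k) - L k := by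
    intro k
    ext w
    have h := hlin (c k) w (c k)
    simp only [hidem k] at h
    rw [hcomm w (c k)] at h
    rw [hcomm (jmul (c k) w) (c k)] at h
    simp only [LinearMap.smul_apply, LinearMap.sub_apply, Module.End.mul_apply, hL]
    linear_combination (norm := module) h
  -- commutative subalgebra generated by the L k
  have hcommS : ∀ a ∈ Set.range L, ∀ b ∈ Set.range L, a * b = b * a := by
    rintro _ ⟨k, rfl⟩ _ ⟨m, rfl⟩
    ext w
    exact hLcomm k m w
  letI instCS : CommRing (Algebra.adjoin ℝ (Set.range L)) := Algebra.adjoinCommRingOfComm ℝ hcommS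
  have hmemL : ∀ k, L k ∈ Algebra.adjoin ℝ (Set.range L) := fun k => Algebra.subset_adjoin ⟨k, rfl⟩
  let l : Fin r → Algebra.adjoin ℝ (Set.range L) := fun k => ⟨L k, hmemL k⟩
  -- coercion lemmas
  have coe_l : ∀ k, ((l k : Algebra.adjoin ℝ (Set.range L)) : Module.End ℝ J) = L k := fun _ => rfl
  have coe_mul : ∀ a b : Algebra.adjoin ℝ (Set.range L), ((a * b : Algebra.adjoin ℝ (Set.range L)) : Module.End ℝ J)
      = (a : Module.End ℝ J) * (b : Module.End ℝ J) := fun _ _ => rfl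
  have coe_add : ∀ a b : Algebra.adjoin ℝ (Set.range L), ((a + b : Algebra.adjoin ℝ (Set.range L)) : Module.End ℝ J)
      = (a : Module.End ℝ J) + (b : Module.End ℝ J) := fun _ _ => rfl
  have coe_sub : ∀ a b : Algebra.adjoin ℝ (Set.range L), ((a - b : Algebra.adjoin ℝ (Set.range L)) : Module.End ℝ J)
      = (a : Module.End ℝ J) - (b : Module.End ℝ J) := fun _ _ => rfl
  have coe_smul : ∀ (t : ℝ) (a : Algebra.adjoin ℝ (Set.range L)), ((t • a : Algebra.adjoin ℝ (Set.range L)) : Module.End ℝ J)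
      = t • (a : Module.End ℝ J) := fun _ _ => rfl
  have coe_one : ((1 : Algebra.adjoin ℝ (Set.range L)) : Module.End ℝ J) = 1 := rfl
  have coe_zero : ((0 : Algebra.adjoin ℝ (Set.range L)) : Module.End ℝ J) = 0 := rfl
  have coe_sum : ∀ {γ : Type} (t : Finset γ) (g : γ → Algebra.adjoin ℝ (Set.range L)),
      ((∑ i ∈ t, g i : Algebra.adjoin ℝ (Set.range L)) : Module.End ℝ J) = ∑ i ∈ t, ((g i : Algebra.adjoin ℝ (Set.range L)) : Module.End ℝ J) := by
    intro γ t g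
    induction t using Finset.induction_on with
    | empty => rw [Finset.sum_empty, Finset.sum_empty, coe_zero]
    | insert _ _ ha ih => rw [Finset.sum_insert ha, Finset.sum_insert ha, coe_add, ih]
  have cubicS : ∀ k, (2:ℝ) • (l k * l k * l k) = (3:ℝ) • (l k * l k) - l k := by
    intro k
    apply Subtype.ext
    exact hcubE k
  -- the spectral projections of each L k
  let P : Fin r → Fin 3 → Algebra.adjoin ℝ (Set.range L) := fun k a =>
    Fin.cases (1 + (2:ℝ) • (l k * l k) - (3:ℝ) • l k)
      (fun a' => Fin.cases ((4:ℝ) • l k - (4:ℝ) • (l k * l k))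
        (fun _ => (2:ℝ) • (l k * l k) - l k) a') a
  have hP0 : ∀ k, P k 0 = 1 + (2:ℝ) • (l k * l k) - (3:ℝ) • l k := fun _ => rfl
  have hP1 : ∀ k, P k 1 = (4:ℝ) • l k - (4:ℝ) • (l k * l k) := fun _ => rfl
  have hP2 : ∀ k, P k 2 = (2:ℝ) • (l k * l k) - l k := fun _ => rfl
  have hPsum : ∀ k, ∑ a : Fin 3, P k a = 1 := by
    intro k
    rw [Fin.sum_univ_three, hP0, hP1, hP2]
    simp only [Algebra.smul_def, map_ofNat]
    ring
  have hPeig : ∀ k a, (2:ℝ) • (l k * P k a) = (2 * vaF a) • P k a := by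
    intro k a
    have cub := cubicS k
    simp only [Algebra.smul_def, map_ofNat] at cub
    rcases fin3_cases a with rfl|rfl|rfl
    · rw [hP0, (by norm_num [vaF] : (2:ℝ) * vaF 0 = 0), zero_smul]
      simp only [Algebra.smul_def, map_ofNat]
      linear_combination (2 : Algebra.adjoin ℝ (Set.range L)) * cub
    · rw [hP1, (by norm_num [vaF] : (2:ℝ) * vaF 1 = 1), one_smul]
      simp only [Algebra.smul_def, map_ofNat]
      linear_combination (-4 : Algebra.adjoin ℝ (Set.range L)) * cub
    · rw [hP2, (by norm_num [vaF] : (2:ℝ) * vaF 2 = 2)]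
      simp only [Algebra.smul_def, map_ofNat]
      linear_combination (2 : Algebra.adjoin ℝ (Set.range L)) * cub
  let QS : (Fin r → Fin 3) → Algebra.adjoin ℝ (Set.range L) := fun lam => ∏ k, P k (lam k)
  have hQdef : ∀ lam, QS lam = ∏ k, P k (lam k) := fun _ => rfl
  have hQone : ∑ lam : Fin r → Fin 3, QS lam = 1 := by
    rw [← Fintype.prod_sum (fun k (a : Fin 3) => P k a)]
    rw [Finset.prod_congr rfl (fun k _ => hPsum k)]
    exact Finset.prod_const_one
  have hLone : (∑ k, L k) = (1 : Module.End ℝ J) := by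
    ext w
    rw [LinearMap.sum_apply]
    have h1 : (∑ k, jmul (c k)) = jmul one := by rw [← hsum, map_sum]
    calc ∑ k, (L k) w = (∑ k, jmul (c k)) w := by rw [LinearMap.sum_apply]
      _ = jmul one w := by rw [h1]
      _ = w := hone w
      _ = (1 : Module.End ℝ J) w := rfl
  have hsumlS : ∑ k, l k = 1 := by
    apply Subtype.ext
    rw [coe_sum]
    simpa only [coe_l, coe_one] using hLone
  have hQeig : ∀ lam k, (2:ℝ) • (l k * QS lam) = (2 * vaF (lam k)) • QS lam := by
    intro lam k
    rw [hQdef, ← Finset.mul_prod_erase univ (fun k => P k (lam k)) (Finset.mem_univ k),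
      ← mul_assoc, ← smul_mul_assoc, hPeig k (lam k), smul_mul_assoc]
  have hQzero : ∀ lam, (∑ k, vaF (lam k)) ≠ 1 → QS lam = 0 := by
    intro lam hs
    have h3 : (2:ℝ) • QS lam = (∑ k, 2 * vaF (lam k)) • QS lam := by
      have t1 : (2:ℝ) • QS lam = (2:ℝ) • ((∑ k, l k) * QS lam) := by rw [hsumlS, one_mul]
      rw [t1, Finset.sum_mul, Finset.smul_sum,
        Finset.sum_congr rfl (fun k _ => hQeig lam k), ← Finset.sum_smul]
    have h5 : ((∑ k, 2 * vaF (lam k)) - 2) • QS lam = 0 := by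
      rw [sub_smul, ← h3, sub_self]
    have hcoef : (∑ k, 2 * vaF (lam k)) - 2 ≠ 0 := by
      rw [← Finset.mul_sum]
      intro hc
      exact hs (by linarith)
    exact ((smul_eq_zero.mp h5).resolve_left hcoef)
  -- action of the projections on Peirce-type vectors
  have hPact : ∀ (k : Fin r) (a : Fin 3) (v : J) (t : ℝ), jmul (c k) v = t • v →
      ((P k a : Algebra.adjoin ℝ (Set.range L)) : Module.End ℝ J) v = epF a t • v := by
    intro k a v t hv
    have hLv : L k v = t • v := hv
    rcases fin3_cases a with rfl|rfl|rfl
    · rw [hP0, coe_sub, coe_add, coe_one, coe_smul, coe_smul, coe_mul, coe_l]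
      simp only [LinearMap.sub_apply, LinearMap.add_apply, LinearMap.smul_apply,
        Module.End.mul_apply, Module.End.one_apply, hLv, map_smul, epF]
      module
    · rw [hP1, coe_sub, coe_smul, coe_smul, coe_mul, coe_l]
      simp only [LinearMap.sub_apply, LinearMap.smul_apply,
        Module.End.mul_apply, hLv, map_smul, epF]
      module
    · rw [hP2, coe_sub, coe_smul, coe_mul, coe_l]
      simp only [LinearMap.sub_apply, LinearMap.smul_apply,
        Module.End.mul_apply, hLv, map_smul, epF]
      module
  have hact : ∀ (v : J) (t : Fin r → ℝ), (∀ k, jmul (c k) v = t k • v) →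
      ∀ (s : Finset (Fin r)) (lam : Fin r → Fin 3),
      ((∏ k ∈ s, P k (lam k) : Algebra.adjoin ℝ (Set.range L)) : Module.End ℝ J) v = (∏ k ∈ s, epF (lam k) (t k)) • v := by
    intro v t hv s lam
    induction s using Finset.induction_on with
    | empty =>
      rw [Finset.prod_empty, Finset.prod_empty, coe_one, one_smul, Module.End.one_apply]
    | insert _ _ ha ih =>
      rw [Finset.prod_insert ha, Finset.prod_insert ha, coe_mul, Module.End.mul_apply, ih,
        map_smul, hPact _ _ v _ (hv _), smul_smul, mul_comm]
  -- the projections indexed by pairs sum to one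
  have hQtotal : ∑ p : {p : Fin r × Fin r // p.1 ≤ p.2}, QS (laF p) = 1 := by
    have himg : ∀ lam : Fin r → Fin 3,
        lam ∉ (univ : Finset {p : Fin r × Fin r // p.1 ≤ p.2}).image laF → QS lam = 0 := by
      intro lam hlam
      refine hQzero lam (fun hc => hlam ?_)
      obtain ⟨p, hp⟩ := laF_surj lam hc
      exact Finset.mem_image.mpr ⟨p, Finset.mem_univ p, hp.symm⟩
    have h6 : ∑ lam ∈ (univ : Finset {p : Fin r × Fin r // p.1 ≤ p.2}).image laF, QS lam
        = ∑ lam : Fin r → Fin 3, QS lam :=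
      Finset.sum_subset (Finset.subset_univ _) (fun lam _ h => himg lam h)
    have h7 : ∑ lam ∈ (univ : Finset {p : Fin r × Fin r // p.1 ≤ p.2}).image laF, QS lam
        = ∑ p : {p : Fin r × Fin r // p.1 ≤ p.2}, QS (laF p) :=
      Finset.sum_image (fun p _ q _ h => laF_inj h)
    rw [← h7, h6, hQone]
  intro x
  refine ⟨fun p => ((QS (laF p) : Algebra.adjoin ℝ (Set.range L)) : Module.End ℝ J) x, ⟨?_, ?_⟩, ?_⟩
  · -- membership in the Peirce spaces
    intro p
    simp only [Peirce, Submodule.mem_iInf, LinearMap.mem_ker]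
    intro k
    rw [LinearMap.sub_apply, LinearMap.smul_apply, LinearMap.id_apply, vaF_laF p k,
      sub_eq_zero]
    have h10 := hQeig (laF p) k
    have h11 := congrArg (fun (s : Algebra.adjoin ℝ (Set.range L)) => ((s : Module.End ℝ J)) x) h10
    simp only [coe_smul, coe_mul, coe_l, LinearMap.smul_apply, Module.End.mul_apply] at h11
    have h12 : (2:ℝ) • ((L k) (((QS (laF p) : Algebra.adjoin ℝ (Set.range L)) : Module.End ℝ J) x))
        = (2:ℝ) • (vaF (laF p k) • ((QS (laF p) : Algebra.adjoin ℝ (Set.range L)) : Module.End ℝ J) x) := by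
      rw [h11, mul_smul]
    exact smul_right_injective J (by norm_num : (2:ℝ) ≠ 0) h12
  · -- the components sum to x
    have h8 : ((∑ p : {p : Fin r × Fin r // p.1 ≤ p.2}, QS (laF p) : Algebra.adjoin ℝ (Set.range L)) : Module.End ℝ J)
        = ((1 : Algebra.adjoin ℝ (Set.range L)) : Module.End ℝ J) := by rw [hQtotal]
    rw [coe_sum, coe_one] at h8
    calc ∑ p : {p : Fin r × Fin r // p.1 ≤ p.2}, ((QS (laF p) : Algebra.adjoin ℝ (Set.range L)) : Module.End ℝ J) x
        = (∑ p : {p : Fin r × Fin r // p.1 ≤ p.2},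
            ((QS (laF p) : Algebra.adjoin ℝ (Set.range L)) : Module.End ℝ J)) x := (LinearMap.sum_apply _ _ _).symm
      _ = x := by rw [h8, Module.End.one_apply]
  · -- uniqueness
    rintro f ⟨hfm, hfs⟩
    funext p
    have key : ∀ q : {p : Fin r × Fin r // p.1 ≤ p.2},
        ((QS (laF p) : Algebra.adjoin ℝ (Set.range L)) : Module.End ℝ J) (f q) = if q = p then f q else 0 := by
      intro q
      have hv : ∀ k, jmul (c k) (f q) = vaF (laF q k) • f q := by
        intro k
        have hm := hfm q
        simp only [Peirce, Submodule.mem_iInf, LinearMap.mem_ker] at hm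
        have hmk := hm k
        rw [LinearMap.sub_apply, LinearMap.smul_apply, LinearMap.id_apply, vaF_laF q k] at hmk
        exact sub_eq_zero.mp hmk
      have h13 := hact (f q) (fun k => vaF (laF q k)) hv univ (laF p)
      have h14 : ∏ k, epF (laF p k) (vaF (laF q k)) = if q = p then (1:ℝ) else 0 := by
        by_cases hpq : q = p
        · subst hpq
          rw [if_pos rfl, Finset.prod_congr rfl
            (fun k _ => by rw [epF_delta, if_pos rfl])]
          exact Finset.prod_const_one
        · rw [if_neg hpq]
          have hne : laF p ≠ laF q := fun h => hpq (laF_inj h).symm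
          obtain ⟨k0, hk0⟩ := Function.ne_iff.mp hne
          exact Finset.prod_eq_zero (Finset.mem_univ k0) (by rw [epF_delta, if_neg hk0])
      rw [hQdef, h13, h14]
      by_cases hpq : q = p
      · rw [if_pos hpq, if_pos hpq, one_smul]
      · rw [if_neg hpq, if_neg hpq, zero_smul]
    calc f p = ∑ q, if q = p then f q else 0 := by
          rw [Finset.sum_ite_eq' univ p f, if_pos (Finset.mem_univ p)]
      _ = ∑ q, ((QS (laF p) : Algebra.adjoin ℝ (Set.range L)) : Module.End ℝ J) (f q) :=
          Finset.sum_congr rfl (fun q _ => (key q).symm)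
      _ = ((QS (laF p) : Algebra.adjoin ℝ (Set.range L)) : Module.End ℝ J) (∑ q, f q) :=
          (map_sum (((QS (laF p) : Algebra.adjoin ℝ (Set.range L)) : Module.End ℝ J)) f univ).symm
      _ = ((QS (laF p) : Algebra.adjoin ℝ (Set.range L)) : Module.End ℝ J) x := by rw [hfs]
end

section
/- Let J be a finite-dimensional unital real Jordan algebra with a Jordan frame (c₁,…,c_r). If 1 ≤ i ≤ j ≤ r and 1 ≤ k ≤ l ≤ r with (i,j) ≠ (k,l), then τ(x, y) = 0 for all x ∈ J_{ij} and y ∈ J_{kl}; that is, distinct Peirce spaces are τ-orthogonal. -/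
open Finset

section Aux

variable {J : Type*} [AddCommGroup J] [Module ℝ J]
variable (jmul : J →ₗ[ℝ] J →ₗ[ℝ] J)

/-- The Jordan axiom in operator-commuted form: `L_x` and `L_{x²}` commute. -/
theorem aux_jbase (hcomm : ∀ x y : J, jmul x y = jmul y x)
    (hjordan : ∀ x y : J, jmul (jmul x y) (jmul x x) = jmul x (jmul y (jmul x x)))
    (x z : J) : jmul x (jmul (jmul x x) z) = jmul (jmul x x) (jmul x z) := by
  have h := hjordan x z
  rw [hcomm (jmul x z) (jmul x x), hcomm z (jmul x x)] at h
  exact h.symm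

/-- Linearized Jordan identity. -/
theorem aux_jlin (hcomm : ∀ x y : J, jmul x y = jmul y x)
    (hjordan : ∀ x y : J, jmul (jmul x y) (jmul x x) = jmul x (jmul y (jmul x x)))
    (u v w z : J) :
    jmul u (jmul (jmul v w) z) - jmul (jmul v w) (jmul u z)
      + (jmul v (jmul (jmul u w) z) - jmul (jmul u w) (jmul v z))
      + (jmul w (jmul (jmul u v) z) - jmul (jmul u v) (jmul w z)) = 0 := by
  have hz : ∀ t : J, jmul t (jmul (jmul t t) z) - jmul (jmul t t) (jmul t z) = 0 :=
    fun t => sub_eq_zero_of_eq (aux_jbase jmul hcomm hjordan t z)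
  have key :
      (jmul u (jmul (jmul v w) z) - jmul (jmul v w) (jmul u z)
      + (jmul v (jmul (jmul u w) z) - jmul (jmul u w) (jmul v z))
      + (jmul w (jmul (jmul u v) z) - jmul (jmul u v) (jmul w z)))
      + (jmul u (jmul (jmul v w) z) - jmul (jmul v w) (jmul u z)
      + (jmul v (jmul (jmul u w) z) - jmul (jmul u w) (jmul v z))
      + (jmul w (jmul (jmul u v) z) - jmul (jmul u v) (jmul w z)))
      =
      (jmul (u+v+w) (jmul (jmul (u+v+w) (u+v+w)) z) - jmul (jmul (u+v+w) (u+v+w)) (jmul (u+v+w) z))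
      - (jmul (u+v) (jmul (jmul (u+v) (u+v)) z) - jmul (jmul (u+v) (u+v)) (jmul (u+v) z))
      - (jmul (u+w) (jmul (jmul (u+w) (u+w)) z) - jmul (jmul (u+w) (u+w)) (jmul (u+w) z))
      - (jmul (v+w) (jmul (jmul (v+w) (v+w)) z) - jmul (jmul (v+w) (v+w)) (jmul (v+w) z))
      + (jmul u (jmul (jmul u u) z) - jmul (jmul u u) (jmul u z))
      + (jmul v (jmul (jmul v v) z) - jmul (jmul v v) (jmul v z))
      + (jmul w (jmul (jmul w w) z) - jmul (jmul w w) (jmul w z)) := by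
    simp only [map_add, LinearMap.add_apply, hcomm v u, hcomm w u, hcomm w v]
    abel
  rw [hz (u+v+w), hz (u+v), hz (u+w), hz (v+w), hz u, hz v, hz w] at key
  simp only [sub_zero, add_zero, zero_sub, neg_zero, zero_add] at key
  have h2 : (2:ℝ) • (jmul u (jmul (jmul v w) z) - jmul (jmul v w) (jmul u z)
      + (jmul v (jmul (jmul u w) z) - jmul (jmul u w) (jmul v z))
      + (jmul w (jmul (jmul u v) z) - jmul (jmul u v) (jmul w z))) = 0 := by
    rw [two_smul]; exact key
  exact (smul_eq_zero.mp h2).resolve_left two_ne_zero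

/-- `[L_x, L_y]` is a derivation; elementwise form. -/
theorem aux_jder (hcomm : ∀ x y : J, jmul x y = jmul y x)
    (hjordan : ∀ x y : J, jmul (jmul x y) (jmul x x) = jmul x (jmul y (jmul x x)))
    (x y a b : J) :
    jmul (jmul x (jmul y a)) b - jmul (jmul y (jmul x a)) b
      = jmul x (jmul y (jmul a b)) - jmul y (jmul x (jmul a b))
        - (jmul a (jmul x (jmul y b)) - jmul a (jmul y (jmul x b))) := by
  have h1 := aux_jlin jmul hcomm hjordan x a b y
  have h2 := aux_jlin jmul hcomm hjordan y a b x
  have key :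
      (jmul (jmul x (jmul y a)) b - jmul (jmul y (jmul x a)) b)
      - (jmul x (jmul y (jmul a b)) - jmul y (jmul x (jmul a b))
        - (jmul a (jmul x (jmul y b)) - jmul a (jmul y (jmul x b))))
      =
      (jmul y (jmul (jmul a b) x) - jmul (jmul a b) (jmul y x)
      + (jmul a (jmul (jmul y b) x) - jmul (jmul y b) (jmul a x))
      + (jmul b (jmul (jmul y a) x) - jmul (jmul y a) (jmul b x)))
      -
      (jmul x (jmul (jmul a b) y) - jmul (jmul a b) (jmul x y)
      + (jmul a (jmul (jmul x b) y) - jmul (jmul x b) (jmul a y))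
      + (jmul b (jmul (jmul x a) y) - jmul (jmul x a) (jmul b y))) := by
    simp only [hcomm y x, hcomm a x, hcomm a y, hcomm b x, hcomm b y, hcomm b a,
      hcomm (jmul a b) y, hcomm (jmul a b) x, hcomm (jmul x b) y, hcomm (jmul y b) x,
      hcomm (jmul x a) y, hcomm (jmul y a) x,
      hcomm (jmul y a) (jmul x b), hcomm (jmul y b) (jmul x a),
      hcomm (jmul y (jmul x a)) b, hcomm (jmul x (jmul y a)) b]
    abel
  rw [h1, h2, sub_zero] at key
  exact sub_eq_zero.mp key

/-- The multiplication operator of `[L_x,L_y]a` is a commutator, so it is traceless. -/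
theorem aux_jtr [FiniteDimensional ℝ J] (hcomm : ∀ x y : J, jmul x y = jmul y x)
    (hjordan : ∀ x y : J, jmul (jmul x y) (jmul x x) = jmul x (jmul y (jmul x x)))
    (x y a : J) :
    LinearMap.trace ℝ J (jmul (jmul x (jmul y a) - jmul y (jmul x a))) = 0 := by
  have hop : jmul (jmul x (jmul y a) - jmul y (jmul x a))
      = (jmul x * jmul y - jmul y * jmul x) * jmul a
        - jmul a * (jmul x * jmul y - jmul y * jmul x) := by
    ext b
    simp only [map_sub, LinearMap.sub_apply, Module.End.mul_apply]
    rw [aux_jder jmul hcomm hjordan x y a b]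
  rw [hop, map_sub, LinearMap.trace_mul_comm, sub_self]

/-- Associativity (symmetry) of the trace form. -/
theorem aux_tausymm [FiniteDimensional ℝ J] (hcomm : ∀ x y : J, jmul x y = jmul y x)
    (hjordan : ∀ x y : J, jmul (jmul x y) (jmul x x) = jmul x (jmul y (jmul x x)))
    (a x y : J) :
    tauF jmul (jmul a x) y = tauF jmul x (jmul a y) := by
  have h := aux_jtr jmul hcomm hjordan y x a
  unfold tauF
  rw [← sub_eq_zero, ← map_sub, ← map_sub, hcomm (jmul a x) y, hcomm a x, hcomm a y]
  exact h

theorem aux_pairlem {r : ℕ} {i j k l : Fin r} (hij : i ≤ j) (hkl : k ≤ l)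
    (hne : (i, j) ≠ (k, l)) :
    ∃ m : Fin r, (((if m = i then (1:ℝ) else 0) + (if m = j then 1 else 0)) / 2)
      ≠ (((if m = k then (1:ℝ) else 0) + (if m = l then 1 else 0)) / 2) := by
  by_contra hc
  push_neg at hc
  have h : ∀ m : Fin r, ((if m = i then (1:ℝ) else 0) + (if m = j then 1 else 0))
      = ((if m = k then (1:ℝ) else 0) + (if m = l then 1 else 0)) := by
    intro m; have := hc m; linarith
  apply hne
  by_cases hij' : i = j
  · subst hij'
    have hi := h i
    rw [if_pos rfl] at hi
    split_ifs at hi with h1 h2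
    · simp [Prod.ext_iff]; exact ⟨h1, h2⟩
    · norm_num at hi
    · norm_num at hi
    · norm_num at hi
  · have hi := h i
    rw [if_pos rfl, if_neg hij'] at hi
    by_cases hik : i = k
    · have hil : i ≠ l := by
        intro hil
        rw [if_pos hik, if_pos hil] at hi; norm_num at hi
      have hj := h j
      rw [if_neg (fun hji : j = i => hij' hji.symm), if_pos rfl] at hj
      by_cases hjl : j = l
      · simp [Prod.ext_iff]; exact ⟨hik, hjl⟩
      · exfalso
        rw [if_neg hjl] at hj
        by_cases hjk : j = k
        · exact hij' (by rw [hik, ← hjk])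
        · rw [if_neg hjk] at hj; norm_num at hj
    · exfalso
      have hil : i = l := by
        by_contra hil
        rw [if_neg hik, if_neg hil] at hi; norm_num at hi
      have hki : k < i := lt_of_le_of_ne (hil ▸ hkl) (fun h' => hik h'.symm)
      have hkj : k ≠ j := ne_of_lt (lt_of_lt_of_le hki hij)
      have hk := h k
      rw [if_neg (fun h' : k = i => hik h'.symm), if_neg hkj, if_pos rfl] at hk
      split_ifs at hk <;> norm_num at hk

end Aux

/-- distinct Peirce spaces of a Jordan frame are orthogonal with respect
to the trace form `τ`. -/
theorem stmt6 (J : Type*) [AddCommGroup J] [Module ℝ J] [FiniteDimensional ℝ J]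
    (jmul : J →ₗ[ℝ] J →ₗ[ℝ] J)
    (hcomm : ∀ x y : J, jmul x y = jmul y x)
    (hjordan : ∀ x y : J, jmul (jmul x y) (jmul x x) = jmul x (jmul y (jmul x x)))
    (one : J) (hone : ∀ x : J, jmul one x = x)
    (r : ℕ) (c : Fin r → J) (hframe : IsJordanFrame jmul one c)
    (i j k l : Fin r) (hij : i ≤ j) (hkl : k ≤ l) (hne : (i, j) ≠ (k, l)) :
    ∀ x ∈ Peirce jmul c i j, ∀ y ∈ Peirce jmul c k l, tauF jmul x y = 0 := by
  intro x hx y hy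
  have hx' : ∀ m : Fin r, jmul (c m) x
      = (((if m = i then (1:ℝ) else 0) + (if m = j then 1 else 0)) / 2) • x := by
    intro m
    have h := (Submodule.mem_iInf _).mp hx m
    rw [LinearMap.mem_ker, LinearMap.sub_apply, LinearMap.smul_apply, LinearMap.id_apply,
      sub_eq_zero] at h
    exact h
  have hy' : ∀ m : Fin r, jmul (c m) y
      = (((if m = k then (1:ℝ) else 0) + (if m = l then 1 else 0)) / 2) • y := by
    intro m
    have h := (Submodule.mem_iInf _).mp hy m
    rw [LinearMap.mem_ker, LinearMap.sub_apply, LinearMap.smul_apply, LinearMap.id_apply,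
      sub_eq_zero] at h
    exact h
  have tsl : ∀ (s : ℝ) (p q : J), tauF jmul (s • p) q = s * tauF jmul p q := by
    intro s p q
    simp [tauF, map_smul, LinearMap.smul_apply, smul_eq_mul]
  have tsr : ∀ (s : ℝ) (p q : J), tauF jmul p (s • q) = s * tauF jmul p q := by
    intro s p q
    simp [tauF, map_smul, LinearMap.smul_apply, smul_eq_mul]
  obtain ⟨m, hm⟩ := aux_pairlem hij hkl hne
  have h1 : tauF jmul (jmul (c m) x) y = tauF jmul x (jmul (c m) y) :=
    aux_tausymm jmul hcomm hjordan (c m) x y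
  rw [hx' m, hy' m, tsl, tsr] at h1
  have h2 : ((((if m = i then (1:ℝ) else 0) + (if m = j then 1 else 0)) / 2)
      - (((if m = k then (1:ℝ) else 0) + (if m = l then 1 else 0)) / 2)) * tauF jmul x y = 0 := by
    rw [sub_mul, h1, sub_self]
  exact (mul_eq_zero.mp h2).resolve_left (sub_ne_zero.mpr hm)
end

section
/- Let J be a finite-dimensional, unital, positive real Jordan algebra and (c₁,…,c_r) a Jordan frame of J. Then for each i, the Peirce space J_{ii} is one-dimensional and equals the span of c_i: J_{ii} = ℝ·c_i. -/
open Finset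

section Aux
variable {J : Type*} [AddCommGroup J] [Module ℝ J] (jmul : J →ₗ[ℝ] J →ₗ[ℝ] J)

theorem lemS (hcomm : ∀ x y : J, jmul x y = jmul y x)
    (hjordan : ∀ x y : J, jmul (jmul x y) (jmul x x) = jmul x (jmul y (jmul x x))) :
    ∀ x z y : J, jmul (jmul x x) (jmul z y) + (2:ℝ) • jmul (jmul x z) (jmul x y)
      = jmul z (jmul (jmul x x) y) + (2:ℝ) • jmul x (jmul (jmul x z) y) := by
  have h1 : ∀ x y : J, jmul (jmul x x) (jmul x y) = jmul x (jmul (jmul x x) y) := by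
    intro x y
    have := hjordan x y
    rw [hcomm (jmul x y) (jmul x x), hcomm y (jmul x x)] at this
    exact this
  intro x z y
  have hA := h1 (x + z) y
  have hB := h1 (x - z) y
  have hz := h1 z y
  simp only [map_add, map_sub, LinearMap.add_apply, LinearMap.sub_apply, hcomm z x] at hA hB
  linear_combination (norm := module) ((1:ℝ)/2) • hA - ((1:ℝ)/2) • hB - hz

theorem lemA (hcomm : ∀ x y : J, jmul x y = jmul y x)
    (hjordan : ∀ x y : J, jmul (jmul x y) (jmul x x) = jmul x (jmul y (jmul x x))) :
    ∀ u v w y : J,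
      jmul (jmul u w) (jmul v y) + jmul (jmul u v) (jmul w y) + jmul (jmul v w) (jmul u y)
      = jmul v (jmul (jmul u w) y) + jmul u (jmul (jmul v w) y) + jmul w (jmul (jmul u v) y) := by
  intro u v w y
  have hA := lemS jmul hcomm hjordan (u + w) v y
  have hu := lemS jmul hcomm hjordan u v y
  have hw := lemS jmul hcomm hjordan w v y
  simp only [map_add, LinearMap.add_apply, hcomm w u, hcomm w v] at hA hu hw ⊢
  linear_combination (norm := module) ((1:ℝ)/2) • hA - ((1:ℝ)/2) • hu - ((1:ℝ)/2) • hw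

theorem comm_eigen (hcomm : ∀ x y : J, jmul x y = jmul y x)
    (hjordan : ∀ x y : J, jmul (jmul x y) (jmul x x) = jmul x (jmul y (jmul x x)))
    (c z : J) (hc : jmul c c = c) (h : jmul c z = z ∨ jmul c z = 0) :
    ∀ y, jmul c (jmul z y) = jmul z (jmul c y) := by
  intro y
  have hS := lemS jmul hcomm hjordan c z y
  rw [hc] at hS
  rcases h with h | h <;> rw [h] at hS
  · linear_combination (norm := module) (-1 : ℝ) • hS
  · simp only [map_zero, LinearMap.zero_apply] at hS
    linear_combination (norm := module) hS

end Aux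

/-- Powers of `x` relative to a base idempotent `e`. -/
def pwF {J : Type*} [AddCommGroup J] [Module ℝ J] (jmul : J →ₗ[ℝ] J →ₗ[ℝ] J)
    (x e : J) : ℕ → J := fun n => (jmul x)^[n] e

section Aux2
variable {J : Type*} [AddCommGroup J] [Module ℝ J] (jmul : J →ₗ[ℝ] J →ₗ[ℝ] J)

theorem pwF_zero (x e : J) : pwF jmul x e 0 = e := rfl

theorem pwF_succ (x e : J) (n : ℕ) :
    pwF jmul x e (n+1) = jmul x (pwF jmul x e n) :=
  Function.iterate_succ_apply' _ _ _


theorem pw_key (hcomm : ∀ x y : J, jmul x y = jmul y x)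
    (hjordan : ∀ x y : J, jmul (jmul x y) (jmul x x) = jmul x (jmul y (jmul x x)))
    (e x : J) (he : jmul e e = e) (hex : jmul e x = x) :
    ∀ N : ℕ, (∀ a b, a + b = N →
        jmul (pwF jmul x e a) (pwF jmul x e b) = pwF jmul x e N)
      ∧ (∀ a b, a + b = N → ∀ y, jmul (pwF jmul x e a) (jmul (pwF jmul x e b) y)
          = jmul (pwF jmul x e b) (jmul (pwF jmul x e a) y)) := by
  let pw : ℕ → J := pwF jmul x e
  show ∀ N, (∀ a b, a + b = N → jmul (pw a) (pw b) = pw N) ∧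
    (∀ a b, a + b = N → ∀ y, jmul (pw a) (jmul (pw b) y) = jmul (pw b) (jmul (pw a) y))
  have pw0 : pw 0 = e := rfl
  have pwS : ∀ n, pw (n+1) = jmul x (pw n) := pwF_succ jmul x e
  have hpwe : ∀ n, jmul e (pw n) = pw n := by
    intro n; induction n with
    | zero => exact he
    | succ n ih =>
      rw [pwS, comm_eigen jmul hcomm hjordan e x he (Or.inl hex) (pw n), ih]
  have pw1 : pw 1 = x := by rw [pwS 0, pw0, hcomm, hex]
  have comm0 : ∀ b y, jmul (pw 0) (jmul (pw b) y) = jmul (pw b) (jmul (pw 0) y) := by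
    intro b y
    exact comm_eigen jmul hcomm hjordan e (pw b) he (Or.inl (hpwe b)) y
  intro N
  induction N using Nat.strong_induction_on with
  | _ N IH =>
  have IHp : ∀ k, k < N → ∀ a b, a + b = k → jmul (pw a) (pw b) = pw k :=
    fun k hk => (IH k hk).1
  have IHc : ∀ k, k < N → ∀ a b, a + b = k → ∀ y,
      jmul (pw a) (jmul (pw b) y) = jmul (pw b) (jmul (pw a) y) := fun k hk => (IH k hk).2
  by_cases hN2 : N ≤ 2
  · interval_cases N
    · constructor <;> intro a b hab
      · obtain rfl : a = 0 := by omega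
        obtain rfl : b = 0 := by omega
        exact he
      · obtain rfl : a = 0 := by omega
        obtain rfl : b = 0 := by omega
        intro y; rfl
    · constructor <;> intro a b hab <;>
        (have ha : a ≤ 1 := by omega) <;> interval_cases a
      · obtain rfl : b = 1 := by omega
        exact hpwe 1
      · obtain rfl : b = 0 := by omega
        rw [hcomm]; exact hpwe 1
      · obtain rfl : b = 1 := by omega
        exact comm0 1
      · obtain rfl : b = 0 := by omega
        exact fun y => (comm0 1 y).symm
    · constructor <;> intro a b hab <;>
        (have ha : a ≤ 2 := by omega) <;> interval_cases a
      · obtain rfl : b = 2 := by omega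
        exact hpwe 2
      · obtain rfl : b = 1 := by omega
        rw [pw1, show (2:ℕ) = 1 + 1 from rfl, pwS 1, pw1]
      · obtain rfl : b = 0 := by omega
        rw [hcomm]; exact hpwe 2
      · obtain rfl : b = 2 := by omega
        exact comm0 2
      · obtain rfl : b = 1 := by omega
        exact fun y => rfl
      · obtain rfl : b = 0 := by omega
        exact fun y => (comm0 2 y).symm
  · -- N = m + 1 with m >= 2
    obtain ⟨m, rfl⟩ : ∃ m, N = m + 1 := ⟨N - 1, by omega⟩
    have hm : 2 ≤ m := by omega
    have hR : ∀ a b, 1 ≤ a → 2 ≤ b → a + b = m + 1 → ∀ y,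
        jmul (pw b) (jmul (pw a) y) + jmul (pw m) (jmul (pw 1) y)
          + jmul (pw (a+1)) (jmul (pw (b-1)) y)
        = jmul (pw a) (jmul (pw b) y) + jmul (pw (b-1)) (jmul (pw (a+1)) y)
          + jmul (pw 1) (jmul (pw m) y) := by
      intro a b ha hb hab y
      have hA := lemA jmul hcomm hjordan (pw (b-1)) (pw a) (pw 1) y
      have e1 : jmul (pw (b-1)) (pw 1) = pw b := IHp b (by omega) (b-1) 1 (by omega)
      have e2 : jmul (pw (b-1)) (pw a) = pw m := IHp m (by omega) _ _ (by omega)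
      have e3 : jmul (pw a) (pw 1) = pw (a+1) := IHp (a+1) (by omega) _ _ rfl
      rw [e1, e2, e3] at hA
      linear_combination (norm := module) hA
    have hchain : ∀ a, 1 ≤ a → a ≤ m → ∀ y,
        jmul (pw a) (jmul (pw (m + 1 - a)) y) - jmul (pw (m + 1 - a)) (jmul (pw a) y)
        = (a:ℝ) • (jmul (pw 1) (jmul (pw m) y) - jmul (pw m) (jmul (pw 1) y)) := by
      intro a ha
      induction a, ha using Nat.le_induction with
      | base =>
        intro _ y
        rw [show m + 1 - 1 = m by omega]
        module
      | succ a ha ih =>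
        intro ham y
        have ih' := ih (by omega) y
        have hRi := hR a (m + 1 - a) ha (by omega) (by omega) y
        rw [show m + 1 - a - 1 = m + 1 - (a+1) by omega] at hRi
        have hcast : ((a+1 : ℕ) : ℝ) = (a : ℝ) + 1 := by push_cast; ring
        rw [hcast]
        linear_combination (norm := module) ih' + hRi
    have hD1 : ∀ y, jmul (pw 1) (jmul (pw m) y) = jmul (pw m) (jmul (pw 1) y) := by
      intro y
      have h1 := hchain m (by omega) le_rfl y
      rw [show m + 1 - m = 1 by omega] at h1
      have h2 : ((m:ℝ)+1) • (jmul (pw 1) (jmul (pw m) y) - jmul (pw m) (jmul (pw 1) y))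
          = 0 := by linear_combination (norm := module) -h1
      rcases smul_eq_zero.mp h2 with h3 | h3
      · exfalso
        have hpos : (0:ℝ) < (m:ℝ) + 1 := by positivity
        rw [h3] at hpos; exact lt_irrefl 0 hpos
      · exact sub_eq_zero.mp h3
    have commN : ∀ a b, a + b = m + 1 → ∀ y,
        jmul (pw a) (jmul (pw b) y) = jmul (pw b) (jmul (pw a) y) := by
      intro a b hab y
      rcases Nat.eq_zero_or_pos a with rfl | ha
      · exact comm0 b y
      rcases Nat.eq_zero_or_pos b with rfl | hb
      · exact (comm0 a y).symm
      have hc := hchain a ha (by omega) y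
      rw [show m + 1 - a = b by omega] at hc
      rw [hD1 y, sub_self, smul_zero] at hc
      exact sub_eq_zero.mp hc
    refine ⟨?_, commN⟩
    intro a b hab
    rcases Nat.eq_zero_or_pos a with rfl | ha
    · obtain rfl : b = m + 1 := by omega
      exact hpwe (m+1)
    rcases Nat.eq_zero_or_pos b with rfl | hb
    · obtain rfl : a = m + 1 := by omega
      rw [hcomm]; exact hpwe (m+1)
    have hb1 : pw b = jmul (pw 1) (pw (b-1)) := by
      rw [pw1, ← pwS]; congr 1; omega
    have hcab : jmul (pw a) (jmul (pw 1) (pw (b-1)))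
        = jmul (pw 1) (jmul (pw a) (pw (b-1))) := by
      rcases eq_or_lt_of_le (show a + 1 ≤ m + 1 by omega) with hE | hE
      · exact commN a 1 (by omega) (pw (b-1))
      · exact IHc (a+1) hE a 1 rfl (pw (b-1))
    rw [hb1, hcab, IHp m (by omega) a (b-1) (by omega), pw1, pwS]

end Aux2

section Phi
variable {J : Type*} [AddCommGroup J] [Module ℝ J]

open Polynomial in
/-- Evaluation of a real polynomial on the powers `pw`. -/
noncomputable def phiMap (pw : ℕ → J) : Polynomial ℝ →ₗ[ℝ] J where
  toFun f := f.sum fun n a => a • pw n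
  map_add' f g := Polynomial.sum_add_index f g _ (fun n => zero_smul ℝ (pw n))
    (fun n a b => add_smul a b (pw n))
  map_smul' r f := by
    simp only [RingHom.id_apply]
    rw [Polynomial.sum_smul_index _ _ _ (fun n => zero_smul ℝ (pw n))]
    simp only [Polynomial.sum_def, mul_smul, ← Finset.smul_sum]

open Polynomial in
theorem phiMap_monomial (pw : ℕ → J) (n : ℕ) (a : ℝ) :
    phiMap pw (monomial n a) = a • pw n := by
  show (monomial n a).sum (fun k c => c • pw k) = a • pw n
  exact Polynomial.sum_monomial_index a _ (zero_smul ℝ (pw n))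

open Polynomial in
theorem phiMap_mul (pw : ℕ → J) (jmul : J →ₗ[ℝ] J →ₗ[ℝ] J)
    (hprod : ∀ a b, jmul (pw a) (pw b) = pw (a + b)) :
    ∀ f g : Polynomial ℝ, phiMap pw (f * g) = jmul (phiMap pw f) (phiMap pw g) := by
  intro f g
  induction f using Polynomial.induction_on' with
  | add p q hp hq =>
    rw [add_mul, map_add, map_add, hp, hq, map_add, LinearMap.add_apply]
  | monomial n a =>
    induction g using Polynomial.induction_on' with
    | add p q hp hq =>
      rw [mul_add, map_add, map_add, hp, hq, map_add]
    | monomial m b =>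
      rw [Polynomial.monomial_mul_monomial, phiMap_monomial, phiMap_monomial, phiMap_monomial]
      simp [map_smul, LinearMap.smul_apply, hprod n m, smul_smul, mul_comm]

open Polynomial in
theorem phiMap_one (pw : ℕ → J) :
    phiMap pw 1 = pw 0 := by
  rw [← Polynomial.C_1, ← Polynomial.monomial_zero_left, phiMap_monomial, one_smul]

open Polynomial in
theorem phiMap_C (pw : ℕ → J) (a : ℝ) : phiMap pw (C a) = a • pw 0 := by
  rw [← Polynomial.monomial_zero_left, phiMap_monomial]

open Polynomial in
theorem phiMap_X (pw : ℕ → J) : phiMap pw X = pw 1 := by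
  rw [← Polynomial.monomial_one_one_eq_X, phiMap_monomial, one_smul]

end Phi

open Polynomial in
/-- in a finite-dimensional, unital, positive real Jordan algebra,
the diagonal Peirce spaces of a Jordan frame are one-dimensional: `J_{ii} = ℝ·c_i`. -/
theorem stmt7 (J : Type*) [AddCommGroup J] [Module ℝ J] [FiniteDimensional ℝ J]
    (jmul : J →ₗ[ℝ] J →ₗ[ℝ] J)
    (hcomm : ∀ x y : J, jmul x y = jmul y x)
    (hjordan : ∀ x y : J, jmul (jmul x y) (jmul x x) = jmul x (jmul y (jmul x x)))
    (one : J) (hone : ∀ x : J, jmul one x = x)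
    (hpos : ∀ x : J, x ≠ 0 → 0 < tauF jmul x x)
    (r : ℕ) (c : Fin r → J) (hframe : IsJordanFrame jmul one c) (i : Fin r) :
    Peirce jmul c i i = Submodule.span ℝ {c i} := by
  obtain ⟨hprim, horth, hsum⟩ := hframe
  have hci : jmul (c i) (c i) = c i := (hprim i).1
  have hcine : c i ≠ 0 := (hprim i).2.1
  have hmem : ∀ z : J, z ∈ Peirce jmul c i i ↔
      ∀ k, jmul (c k) z = (if k = i then (1:ℝ) else 0) • z := by
    intro z
    rw [Peirce, Submodule.mem_iInf]
    apply forall_congr'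
    intro k
    rw [LinearMap.mem_ker, LinearMap.sub_apply, LinearMap.smul_apply, LinearMap.id_apply,
      sub_eq_zero]
    have hsc : ((if k = i then (1:ℝ) else 0) + (if k = i then (1:ℝ) else 0)) / 2
        = (if k = i then (1:ℝ) else 0) := by split_ifs <;> norm_num
    rw [hsc]
  apply le_antisymm
  · -- Peirce ⊆ span {c i}
    intro x hx
    rw [hmem] at hx
    have hcix : jmul (c i) x = x := by
      have := hx i; rwa [if_pos rfl, one_smul] at this
    -- powers of x relative to c i
    set pw : ℕ → J := pwF jmul x (c i) with hpwdef
    have pw0 : pw 0 = c i := rfl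
    have pwS : ∀ n, pw (n+1) = jmul x (pw n) := pwF_succ jmul x (c i)
    have hprod : ∀ a b, jmul (pw a) (pw b) = pw (a + b) := fun a b =>
      (pw_key jmul hcomm hjordan (c i) x hci hcix (a+b)).1 a b rfl
    set φ : Polynomial ℝ →ₗ[ℝ] J := phiMap pw with hφdef
    have φmul : ∀ f g : Polynomial ℝ, φ (f * g) = jmul (φ f) (φ g) :=
      phiMap_mul pw jmul hprod
    have φ1 : φ 1 = c i := phiMap_one pw
    have φX : φ X = x := by
      rw [hφdef, phiMap_X, hpwdef, show (1:ℕ) = 0 + 1 from rfl, pwF_succ, pwF_zero,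
        hcomm, hcix]
    have φC : ∀ a : ℝ, φ (C a) = a • c i := fun a => phiMap_C pw a
    -- a nonzero annihilating polynomial
    have hnli : ¬ LinearIndependent ℝ pw :=
      Module.Finite.not_linearIndependent_of_infinite pw
    obtain ⟨l, hl, hlne⟩ : ∃ l : ℕ →₀ ℝ,
        (Finsupp.linearCombination ℝ pw) l = 0 ∧ l ≠ 0 := by
      by_contra hcon
      push_neg at hcon
      exact hnli (linearIndependent_iff.mpr hcon)
    set p1 : Polynomial ℝ := ⟨AddMonoidAlgebra.ofCoeff l⟩ with hp1def
    have hφp1 : φ p1 = 0 := by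
      have : φ p1 = p1.sum fun n a => a • pw n := rfl
      rw [this]
      rw [Finsupp.linearCombination_apply] at hl
      rw [← hl]
      simp only [Polynomial.sum, Finsupp.sum, hp1def, Polynomial.support_ofFinsupp,
        Polynomial.coeff_ofFinsupp, AddMonoidAlgebra.coeff_ofCoeff]
    have hp1ne : p1 ≠ 0 := by
      rw [hp1def, Ne, Polynomial.ofFinsupp_eq_zero, AddMonoidAlgebra.ofCoeff_eq_zero]
      exact hlne
    -- the ideal of annihilating polynomials
    let K : Ideal (Polynomial ℝ) :=
      { carrier := {f | φ f = 0}
        add_mem' := by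
          intro f g hf hg
          simp only [Set.mem_setOf_eq] at *
          rw [map_add, hf, hg, add_zero]
        zero_mem' := by simp only [Set.mem_setOf_eq, map_zero]
        smul_mem' := by
          intro g f hf
          simp only [Set.mem_setOf_eq, smul_eq_mul] at *
          rw [φmul, hf, map_zero] }
    haveI hKp : K.IsPrincipal := IsPrincipalIdealRing.principal K
    set p₀ : Polynomial ℝ := Submodule.IsPrincipal.generator K with hp₀def
    have hgen : ∀ f : Polynomial ℝ, φ f = 0 ↔ p₀ ∣ f := by
      intro f
      constructor
      · intro h
        exact (Submodule.IsPrincipal.mem_iff_generator_dvd K).mp h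
      · intro h
        have : f ∈ K := (Submodule.IsPrincipal.mem_iff_generator_dvd K).mpr h
        exact this
    have hφp₀ : φ p₀ = 0 := Submodule.IsPrincipal.generator_mem K
    have hp₀ne : p₀ ≠ 0 := by
      intro h
      apply hp1ne
      have hd := (hgen p1).mp hφp1
      rw [h] at hd
      exact zero_dvd_iff.mp hd
    have hφne : ∀ f : Polynomial ℝ, f ≠ 0 → f.natDegree < p₀.natDegree → φ f ≠ 0 := by
      intro f hf hdeg hzero
      exact hf (Polynomial.eq_zero_of_dvd_of_natDegree_lt ((hgen f).mp hzero) hdeg)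
    -- positivity tools
    have htr0 : ∀ u : J, jmul u u = 0 → u = 0 := by
      intro u hu
      by_contra hne
      have h1 := hpos u hne
      rw [tauF, hu, map_zero, map_zero] at h1
      exact lt_irrefl 0 h1
    have htr2 : ∀ u v : J, jmul u u + jmul v v = 0 → v = 0 := by
      intro u v huv
      by_contra hne
      have hv := hpos v hne
      have hu : 0 ≤ tauF jmul u u := by
        rcases eq_or_ne u 0 with rfl | hu0
        · rw [tauF]; simp
        · exact le_of_lt (hpos u hu0)
      have hsum0 : tauF jmul u u + tauF jmul v v = 0 := by
        rw [tauF, tauF, ← map_add, ← map_add, huv, map_zero, map_zero]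
      linarith
    -- degree zero: contradiction
    rcases Nat.eq_zero_or_pos p₀.natDegree with hd0 | hdpos
    · exfalso
      obtain ⟨a, ha⟩ := Polynomial.natDegree_eq_zero.mp hd0
      have ha0 : a ≠ 0 := by
        intro h; rw [h, Polynomial.C_0] at ha; exact hp₀ne ha.symm
      apply hcine
      have : φ (C a) = 0 := by rw [ha]; exact hφp₀
      rw [φC] at this
      exact (smul_eq_zero.mp this).resolve_left ha0
    -- a real root exists
    have hroot : ∃ lam : ℝ, p₀.IsRoot lam := by
      by_contra hnr
      push_neg at hnr
      have hdeg0 : (p₀.map (algebraMap ℝ ℂ)).degree ≠ 0 := by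
        rw [Polynomial.degree_map_eq_of_injective (algebraMap ℝ ℂ).injective]
        exact (Polynomial.natDegree_pos_iff_degree_pos.mp hdpos).ne' 
      obtain ⟨z, hz⟩ := IsAlgClosed.exists_root _ hdeg0
      have him : z.im ≠ 0 := by
        intro h0
        apply hnr z.re
        have hzeq : z = algebraMap ℝ ℂ z.re := by
          apply Complex.ext <;> simp [h0]
        have hz' : (p₀.map (algebraMap ℝ ℂ)).eval z = 0 := hz
        rw [hzeq, Polynomial.eval_map, Polynomial.eval₂_hom] at hz'
        exact (map_eq_zero_iff _ (algebraMap ℝ ℂ).injective).mp hz'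
      have hzc : (p₀.map (algebraMap ℝ ℂ)).eval ((starRingEnd ℂ) z) = 0 := by
        have hmm : p₀.map ((starRingEnd ℂ).comp (algebraMap ℝ ℂ))
            = p₀.map (algebraMap ℝ ℂ) := by
          congr 1
          ext a
          simp [Complex.conj_ofReal]
        have : (p₀.map (algebraMap ℝ ℂ)).map (starRingEnd ℂ)
            = p₀.map (algebraMap ℝ ℂ) := by
          rw [Polynomial.map_map, hmm]
        conv_lhs => rw [← this]
        rw [Polynomial.eval_map, Polynomial.eval₂_hom, hz, map_zero]
      set s : Polynomial ℝ := (X - C z.re)^2 + C (z.im^2) with hsdef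
      have hsmonic : s.Monic := by
        apply Polynomial.Monic.add_of_left ((Polynomial.monic_X_sub_C z.re).pow 2)
        rw [Polynomial.degree_pow, Polynomial.degree_X_sub_C]
        exact lt_of_le_of_lt Polynomial.degree_C_le (by norm_num)
      have hsdeg : s.natDegree = 2 := by
        have : s.degree = 2 := by
          rw [hsdef, Polynomial.degree_add_eq_left_of_degree_lt, Polynomial.degree_pow,
            Polynomial.degree_X_sub_C]
          · norm_num
          · rw [Polynomial.degree_pow, Polynomial.degree_X_sub_C]
            exact lt_of_le_of_lt Polynomial.degree_C_le (by norm_num)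
        exact Polynomial.natDegree_eq_of_degree_eq_some this
      have hzconj : (starRingEnd ℂ) z = 2 * (z.re : ℂ) - z := by
        have := Complex.add_conj z
        push_cast at this ⊢
        linear_combination this
      have hsq : (z - (z.re : ℂ))^2 = -((z.im : ℂ))^2 := by
        have hzim : z - (z.re : ℂ) = (z.im : ℂ) * Complex.I := by
          apply Complex.ext <;> simp
        rw [hzim, mul_pow, Complex.I_sq]
        ring
      have hsmap : s.map (algebraMap ℝ ℂ) = (X - C z) * (X - C ((starRingEnd ℂ) z)) := by
        rw [hsdef]
        have e3' : (Polynomial.C : ℂ →+* ℂ[X]) ((z - (z.re:ℂ))^2)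
            = (Polynomial.C : ℂ →+* ℂ[X]) (-((z.im:ℂ))^2) := congrArg _ hsq
        simp only [map_pow, map_neg, map_sub, map_mul, map_ofNat] at e3'
        simp only [Polynomial.map_add, Polynomial.map_pow, Polynomial.map_sub,
          Polynomial.map_X, Polynomial.map_C, hzconj, Complex.coe_algebraMap,
          Complex.ofReal_pow, map_pow, map_mul, map_sub, map_ofNat]
        linear_combination e3'
      have hsdvd : s ∣ p₀ := by
        rw [← Polynomial.map_dvd_map (algebraMap ℝ ℂ) (algebraMap ℝ ℂ).injective hsmonic]
        rw [hsmap]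
        have hzne : z ≠ (starRingEnd ℂ) z := by
          intro h
          exact him (Complex.conj_eq_iff_im.mp h.symm)
        apply IsCoprime.mul_dvd
        · exact isCoprime_X_sub_C_of_isUnit_sub (IsUnit.mk0 _ (sub_ne_zero_of_ne hzne))
        · rw [Polynomial.dvd_iff_isRoot]; exact hz
        · rw [Polynomial.dvd_iff_isRoot]; exact hzc
      obtain ⟨t, ht⟩ := hsdvd
      have ht0 : t ≠ 0 := by
        rintro rfl; rw [mul_zero] at ht; exact hp₀ne ht
      have hs0 : s ≠ 0 := hsmonic.ne_zero
      have htdeg : t.natDegree < p₀.natDegree := by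
        rw [ht, Polynomial.natDegree_mul hs0 ht0, hsdeg]
        omega
      have hφt : φ t ≠ 0 := hφne t ht0 htdeg
      have hkey : jmul (φ ((X - C z.re) * t)) (φ ((X - C z.re) * t))
          + jmul (z.im • φ t) (z.im • φ t) = 0 := by
        have h1 : jmul (φ ((X - C z.re) * t)) (φ ((X - C z.re) * t))
            = φ (((X - C z.re) * t) * ((X - C z.re) * t)) := (φmul _ _).symm
        have h2 : jmul (z.im • φ t) (z.im • φ t) = (z.im^2) • φ (t * t) := by
          simp only [map_smul, LinearMap.smul_apply, smul_smul]
          rw [← sq, φmul t t]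
        rw [h1, h2, ← map_smul, ← map_add]
        have hpoly : ((X - C z.re) * t) * ((X - C z.re) * t) + z.im^2 • (t * t)
            = p₀ * t := by
          rw [Polynomial.smul_eq_C_mul, ht]
          ring
        rw [hpoly]
        exact (hgen _).mpr (dvd_mul_right _ _)
      have hv0 := htr2 _ _ hkey
      rcases smul_eq_zero.mp hv0 with h | h
      · exact him h
      · exact hφt h
    obtain ⟨lam, hlam⟩ := hroot
    obtain ⟨q, hq⟩ := Polynomial.dvd_iff_isRoot.mpr hlam
    have hq0 : q ≠ 0 := by
      rintro rfl; rw [mul_zero] at hq; exact hp₀ne hq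
    have hXlam : (X - C lam : Polynomial ℝ) ≠ 0 := Polynomial.X_sub_C_ne_zero lam
    have hdq : p₀.natDegree = 1 + q.natDegree := by
      rw [hq, Polynomial.natDegree_mul hXlam hq0, Polynomial.natDegree_X_sub_C]
    by_cases hdvd : (X - C lam) ∣ q
    · exfalso
      obtain ⟨q', hq'⟩ := hdvd
      have hφq : φ q ≠ 0 := hφne q hq0 (by omega)
      apply hφq
      apply htr0
      have hpoly : q * q = p₀ * q' := by rw [hq, hq']; ring
      rw [← φmul, hpoly]
      exact (hgen _).mpr (dvd_mul_right _ _)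
    · have hk : q.eval lam ≠ 0 := fun h => hdvd (Polynomial.dvd_iff_isRoot.mpr h)
      set κ := q.eval lam with hκdef
      rcases Nat.eq_zero_or_pos q.natDegree with hq0d | hq1d
      · -- degree one: x is a multiple of c i
        obtain ⟨a, ha⟩ := Polynomial.natDegree_eq_zero.mp hq0d
        have haκ : a = κ := by rw [hκdef, ← ha, Polynomial.eval_C]
        have hφeval : φ ((X - C lam) * C a) = 0 := by
          rw [ha, ← hq]
          exact hφp₀
        have hXlam' : φ (X - C lam) = x - lam • c i := by
          rw [map_sub, φX, φC]
        rw [φmul, hXlam', φC, map_smul] at hφeval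
        have hcc : jmul (x - lam • c i) (c i) = x - lam • c i := by
          rw [hcomm, map_sub, hcix, map_smul, hci]
        rw [hcc] at hφeval
        have haa : a ≠ 0 := by rw [haκ]; exact hk
        have hxeq : x = lam • c i := by
          have hz := (smul_eq_zero.mp hφeval).resolve_left haa
          exact (sub_eq_zero.mp hz)
        exact Submodule.mem_span_singleton.mpr ⟨lam, hxeq.symm⟩
      · exfalso
        obtain ⟨h, hh⟩ := Polynomial.X_sub_C_dvd_sub_C_eval (a := lam) (p := q)
        set g1 : Polynomial ℝ := C κ⁻¹ * q with hg1def
        set g2 : Polynomial ℝ := 1 - g1 with hg2def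
        have hκκ : (C κ⁻¹ * C κ : Polynomial ℝ) = 1 := by
          rw [← Polynomial.C_mul, inv_mul_cancel₀ hk, Polynomial.C_1]
        have hg2' : g2 = -(C κ⁻¹ * ((X - C lam) * h)) := by
          rw [hg2def, hg1def]
          linear_combination (-(C κ⁻¹ : Polynomial ℝ)) * hh - hκκ
        have hdvd12 : p₀ ∣ g1 * g2 := by
          refine ⟨-(C κ⁻¹ * C κ⁻¹ * h), ?_⟩
          rw [hg2', hg1def, hq]
          ring
        have he1 : jmul (φ g1) (φ g1) = φ g1 := by
          have hp : g1 * g1 = g1 - g1 * g2 := by rw [hg2def]; ring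
          rw [← φmul, hp, map_sub, (hgen _).mpr hdvd12, sub_zero]
        have he2 : jmul (φ g2) (φ g2) = φ g2 := by
          have hp : g2 * g2 = g2 - g1 * g2 := by rw [hg2def]; ring
          rw [← φmul, hp, map_sub, (hgen _).mpr hdvd12, sub_zero]
        have hsum12 : φ g1 + φ g2 = c i := by
          rw [← map_add, hg2def, add_sub_cancel, φ1]
        have hne1 : φ g1 ≠ 0 := by
          intro h0
          have hdg1 : (X - C lam) ∣ g1 := dvd_trans ⟨q, hq⟩ ((hgen g1).mp h0)
          have hg1root : g1.eval lam = 0 := Polynomial.dvd_iff_isRoot.mp hdg1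
          rw [hg1def, Polynomial.eval_mul, Polynomial.eval_C, ← hκdef,
            inv_mul_cancel₀ hk] at hg1root
          exact one_ne_zero hg1root
        have hne2 : φ g2 ≠ 0 := by
          intro h0
          have hqdvd : q ∣ g2 := dvd_trans ⟨X - C lam, by rw [hq]; ring⟩ ((hgen g2).mp h0)
          have hq1 : q ∣ 1 := by
            have hrw : (1 : Polynomial ℝ) = g2 + C κ⁻¹ * q := by
              rw [hg2def, hg1def]; ring
            rw [hrw]
            exact dvd_add hqdvd (dvd_mul_left q (C κ⁻¹))
          have := Polynomial.natDegree_eq_zero_of_isUnit (isUnit_of_dvd_one hq1)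
          omega
        exact (hprim i).2.2 ⟨φ g1, φ g2, he1, he2, hne1, hne2, hsum12.symm⟩
  · -- span {c i} ⊆ Peirce
    rw [Submodule.span_le, Set.singleton_subset_iff, SetLike.mem_coe, hmem]
    intro k
    by_cases hk : k = i
    · subst hk; rw [if_pos rfl, one_smul]; exact hci
    · rw [if_neg hk, zero_smul]; exact horth k i hk
end

section
/- Let J be a finite-dimensional, unital, positive real Jordan algebra, (c₁,…,c_r) a Jordan frame, λ₁,…,λ_r ∈ ℝ, and x = Σ_{i=1}^r λ_i c_i. Then the image of the multiplication operator L_x equals the sum of the Peirce spaces indexed by pairs whose coefficients do not sum to zero: L_x(J) = Σ_{1≤i≤j≤r, λ_i+λ_j≠0} J_{ij}. -/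
open Finset

section Aux

open Polynomial Module

variable {J : Type*} [AddCommGroup J] [Module ℝ J]

private lemma half_eq' {M : Type*} [AddCommGroup M] [Module ℝ M] {p q : M} (h : p + p = q + q) :
    p = q := by
  have h2 : (2:ℝ) • p = (2:ℝ) • q := by rw [two_smul, two_smul]; exact h
  exact smul_right_injective M two_ne_zero h2

variable {jmul : J →ₗ[ℝ] J →ₗ[ℝ] J}

private lemma opF (hcomm : ∀ x y : J, jmul x y = jmul y x)
    (hjordan : ∀ x y : J, jmul (jmul x y) (jmul x x) = jmul x (jmul y (jmul x x)))
    (x : J) :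
    (jmul (jmul x x) * jmul x : Module.End ℝ J) = jmul x * jmul (jmul x x) := by
  ext w
  simp only [Module.End.mul_apply]
  calc jmul (jmul x x) (jmul x w) = jmul (jmul x w) (jmul x x) := hcomm _ _
    _ = jmul x (jmul w (jmul x x)) := hjordan x w
    _ = jmul x (jmul (jmul x x) w) := by rw [hcomm w]

private lemma opH (hcomm : ∀ x y : J, jmul x y = jmul y x)
    (hjordan : ∀ x y : J, jmul (jmul x y) (jmul x x) = jmul x (jmul y (jmul x x)))
    (x y : J) :
    (jmul (jmul x x) * jmul y + (jmul (jmul x y) * jmul x + jmul (jmul x y) * jmul x)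
      : Module.End ℝ J)
      = jmul y * jmul (jmul x x) + (jmul x * jmul (jmul x y) + jmul x * jmul (jmul x y)) := by
  set a : Module.End ℝ J := jmul x with ha
  set b : Module.End ℝ J := jmul y with hb
  set A : Module.End ℝ J := jmul (jmul x x) with hA
  set B : Module.End ℝ J := jmul (jmul y y) with hB
  set C : Module.End ℝ J := jmul (jmul x y) with hC
  have hxy : jmul (jmul (x+y) (x+y)) = A + (C + C) + B := by
    have h1 : jmul (x+y) (x+y) = jmul x x + (jmul x y + jmul x y) + jmul y y := by
      simp only [map_add, LinearMap.add_apply]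
      rw [hcomm y x]; abel
    rw [h1]; simp only [map_add]; rfl
  have hxy' : jmul (jmul (x-y) (x-y)) = A - (C + C) + B := by
    have h1 : jmul (x-y) (x-y) = jmul x x - (jmul x y + jmul x y) + jmul y y := by
      simp only [map_sub, LinearMap.sub_apply]
      rw [hcomm y x]; abel
    rw [h1]; simp only [map_sub, map_add]; rfl
  have e1 : (A + (C + C) + B) * (a + b) = (a + b) * (A + (C + C) + B) := by
    have h := opF hcomm hjordan (x + y)
    rwa [hxy, map_add] at h
  have e2 : (A - (C + C) + B) * (a - b) = (a - b) * (A - (C + C) + B) := by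
    have h := opF hcomm hjordan (x - y)
    rwa [hxy', map_sub] at h
  have e4 : B * b = b * B := opF hcomm hjordan y
  apply half_eq'
  have key : (A * b + (C * a + C * a)) + (A * b + (C * a + C * a))
      - ((b * A + (a * C + a * C)) + (b * A + (a * C + a * C)))
      = (((A + (C + C) + B) * (a + b) - (a + b) * (A + (C + C) + B))
        - ((A - (C + C) + B) * (a - b) - (a - b) * (A - (C + C) + B)))
        - ((B * b - b * B) + (B * b - b * B)) := by noncomm_ring
  rw [sub_eq_zero_of_eq e1, sub_eq_zero_of_eq e2, sub_eq_zero_of_eq e4] at key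
  simp only [sub_zero, zero_sub, add_zero, neg_zero, sub_self] at key
  exact sub_eq_zero.mp key

private lemma opT (hcomm : ∀ x y : J, jmul x y = jmul y x)
    (hjordan : ∀ x y : J, jmul (jmul x y) (jmul x x) = jmul x (jmul y (jmul x x)))
    (x y z : J) :
    (jmul (jmul x z) * jmul y + (jmul (jmul x y) * jmul z + jmul (jmul z y) * jmul x)
      : Module.End ℝ J)
      = jmul y * jmul (jmul x z) + (jmul z * jmul (jmul x y) + jmul x * jmul (jmul z y)) := by
  set a : Module.End ℝ J := jmul x
  set b : Module.End ℝ J := jmul y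
  set e : Module.End ℝ J := jmul z
  set A : Module.End ℝ J := jmul (jmul x x)
  set D : Module.End ℝ J := jmul (jmul z z)
  set C : Module.End ℝ J := jmul (jmul x y)
  set E : Module.End ℝ J := jmul (jmul x z)
  set G : Module.End ℝ J := jmul (jmul z y)
  have hsq : jmul (jmul (x+z) (x+z)) = A + (E + E) + D := by
    have h1 : jmul (x+z) (x+z) = jmul x x + (jmul x z + jmul x z) + jmul z z := by
      simp only [map_add, LinearMap.add_apply]
      rw [hcomm z x]; abel
    rw [h1]; simp only [map_add]; rfl
  have hmix : jmul (jmul (x+z) y) = C + G := by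
    have h1 : jmul (x+z) y = jmul x y + jmul z y := by
      simp only [map_add, LinearMap.add_apply]
    rw [h1]; simp only [map_add]; rfl
  have h1 : (A + (E + E) + D) * b + ((C + G) * (a + e) + (C + G) * (a + e))
      = b * (A + (E + E) + D) + ((a + e) * (C + G) + (a + e) * (C + G)) := by
    have h := opH hcomm hjordan (x + z) y
    rwa [hsq, hmix, map_add] at h
  have h2 := opH hcomm hjordan x y
  have h3 := opH hcomm hjordan z y
  apply half_eq'
  have key : (E * b + (C * e + G * a)) + (E * b + (C * e + G * a))
      - ((b * E + (e * C + a * G)) + (b * E + (e * C + a * G)))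
      = ((A + (E + E) + D) * b + ((C + G) * (a + e) + (C + G) * (a + e))
          - (b * (A + (E + E) + D) + ((a + e) * (C + G) + (a + e) * (C + G))))
        - (A * b + (C * a + C * a) - (b * A + (a * C + a * C)))
        - (D * b + (G * e + G * e) - (b * D + (e * G + e * G))) := by noncomm_ring
  rw [sub_eq_zero_of_eq h1, sub_eq_zero_of_eq h2, sub_eq_zero_of_eq h3] at key
  simp only [sub_zero, zero_sub, add_zero, neg_zero, sub_self] at key
  exact sub_eq_zero.mp key

private lemma comm_of_orth (hcomm : ∀ x y : J, jmul x y = jmul y x)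
    (hjordan : ∀ x y : J, jmul (jmul x y) (jmul x x) = jmul x (jmul y (jmul x x)))
    {d e : J} (hd : jmul d d = d) (hde : jmul d e = 0) :
    (jmul d * jmul e : Module.End ℝ J) = jmul e * jmul d := by
  have h := opT hcomm hjordan d e d
  rw [hd, hde] at h
  simpa [map_zero] using h

private lemma cubic (hcomm : ∀ x y : J, jmul x y = jmul y x)
    (hjordan : ∀ x y : J, jmul (jmul x y) (jmul x x) = jmul x (jmul y (jmul x x)))
    {d : J} (hd : jmul d d = d) :
    (jmul d * jmul d * jmul d + jmul d * jmul d * jmul d + jmul d : Module.End ℝ J)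
      = jmul d * jmul d + jmul d * jmul d + jmul d * jmul d := by
  ext w
  have h := opH hcomm hjordan d w
  rw [hd] at h
  have h2 := LinearMap.congr_fun h d
  simp only [LinearMap.add_apply, Module.End.mul_apply] at h2
  rw [hd, hcomm w d, hcomm (jmul d w) d] at h2
  simp only [LinearMap.add_apply, Module.End.mul_apply]
  linear_combination (norm := abel) h2.symm

private lemma sup_eigen_top (g : Module.End ℝ J)
    (hc : g*g*g + g*g*g + g = g*g + g*g + g*g) :
    ⨆ μ : ℝ, Module.End.maxGenEigenspace g μ = ⊤ := by
  have hd : (g*g*g + g*g*g + g) - (g*g + g*g + g*g) = 0 := sub_eq_zero_of_eq hc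
  rw [eq_top_iff]
  intro y _
  set P0 : Module.End ℝ J := 1 - g - g - g + g*g + g*g with hP0
  set Ph : Module.End ℝ J := g + g + g + g - (g*g + g*g + g*g + g*g) with hPh
  set P1 : Module.End ℝ J := g*g + g*g - g with hP1
  have hsum : P0 + Ph + P1 = 1 := by rw [hP0, hPh, hP1]; noncomm_ring
  have m0 : P0 y ∈ Module.End.eigenspace g 0 := by
    rw [Module.End.mem_eigenspace_iff]
    have h1 : g * P0 = (g*g*g + g*g*g + g) - (g*g + g*g + g*g) := by rw [hP0]; noncomm_ring
    rw [hd] at h1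
    have := LinearMap.congr_fun h1 y
    simpa using this
  have m1 : P1 y ∈ Module.End.eigenspace g 1 := by
    rw [Module.End.mem_eigenspace_iff]
    have h1 : g * P1 - P1 = (g*g*g + g*g*g + g) - (g*g + g*g + g*g) := by
      rw [hP1]; noncomm_ring
    rw [hd] at h1
    have h2 : g * P1 = P1 := by rwa [sub_eq_zero] at h1
    have := LinearMap.congr_fun h2 y
    simpa using this
  have mh : Ph y ∈ Module.End.eigenspace g 2⁻¹ := by
    rw [Module.End.mem_eigenspace_iff]
    have h1 : g * Ph + g * Ph - Ph
        = -(((g*g*g + g*g*g + g) - (g*g + g*g + g*g))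
            + ((g*g*g + g*g*g + g) - (g*g + g*g + g*g))
            + ((g*g*g + g*g*g + g) - (g*g + g*g + g*g))
            + ((g*g*g + g*g*g + g) - (g*g + g*g + g*g))) := by
      rw [hPh]; noncomm_ring
    rw [hd] at h1
    simp only [add_zero, neg_zero] at h1
    have h2 : g * Ph + g * Ph = Ph := by rwa [sub_eq_zero] at h1
    have h3 := LinearMap.congr_fun h2 y
    simp only [LinearMap.add_apply, Module.End.mul_apply] at h3
    have h4 : (2:ℝ) • g (Ph y) = (2:ℝ) • ((2⁻¹:ℝ) • Ph y) := by
      calc (2:ℝ) • g (Ph y) = g (Ph y) + g (Ph y) := two_smul ℝ _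
        _ = Ph y := h3
        _ = ((2:ℝ) * 2⁻¹) • Ph y := by norm_num
        _ = (2:ℝ) • ((2⁻¹:ℝ) • Ph y) := mul_smul _ _ _
    exact smul_right_injective J two_ne_zero h4
  have hy : y = P0 y + Ph y + P1 y := by
    have := LinearMap.congr_fun hsum y
    simpa using this.symm
  rw [hy]
  have hle : ∀ μ : ℝ, Module.End.eigenspace g μ ≤ ⨆ ν : ℝ, Module.End.maxGenEigenspace g ν :=
    fun μ => le_trans ((g.genEigenspace μ).monotone le_top)
      (le_iSup (fun ν : ℝ => Module.End.maxGenEigenspace g ν) μ)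
  exact add_mem (add_mem (hle 0 m0) (hle 2⁻¹ mh)) (hle 1 m1)

private lemma semisimple_of_cubic [FiniteDimensional ℝ J] (g : Module.End ℝ J)
    (hc : g*g*g + g*g*g + g = g*g + g*g + g*g) :
    g.IsFinitelySemisimple := by
  have hsf : Squarefree (X * ((X - C 1) * (X - C (2⁻¹:ℝ)))) := by
    have e0 : (X : ℝ[X]) = X - C 0 := by simp
    have cop1 : IsCoprime (X : ℝ[X]) (X - C 1) := by
      nth_rewrite 1 [e0]
      exact isCoprime_X_sub_C_of_isUnit_sub (by norm_num)
    have cop2 : IsCoprime (X : ℝ[X]) (X - C 2⁻¹) := by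
      nth_rewrite 1 [e0]
      exact isCoprime_X_sub_C_of_isUnit_sub (by norm_num)
    have cop3 : IsCoprime (X - C (1:ℝ)) (X - C 2⁻¹) :=
      isCoprime_X_sub_C_of_isUnit_sub (by norm_num)
    exact (separable_X.mul (separable_X_sub_C.mul separable_X_sub_C cop3)
      (cop1.mul_right cop2)).squarefree
  have haev : aeval g (X * ((X - C 1) * (X - C (2⁻¹:ℝ)))) = 0 := by
    have hfac : (X * ((X - C 1) * (X - C (2⁻¹:ℝ))))
        = C 2⁻¹ * (X * ((X - C 1) * (C 2 * X - C 1))) := by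
      have h5 : (X - C (2⁻¹:ℝ)) = C 2⁻¹ * (C 2 * X - C 1) := by
        rw [mul_sub, ← mul_assoc, ← C_mul, ← C_mul]; norm_num
      rw [h5]; ring
    rw [hfac, map_mul, aeval_C]
    suffices h : aeval g (X * ((X - C (1:ℝ)) * (C 2 * X - C 1))) = 0 by rw [h, mul_zero]
    simp only [map_mul, map_sub, aeval_X, aeval_C, map_one, map_ofNat]
    have hz : g * ((g - 1) * (2 * g - 1))
        = (g*g*g + g*g*g + g) - (g*g + g*g + g*g) := by noncomm_ring
    rw [hz, sub_eq_zero_of_eq hc]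
  exact (Module.End.isSemisimple_of_squarefree_aeval_eq_zero hsf haev).isFinitelySemisimple

private lemma chi_shape {r : ℕ} (χ : Fin r → ℝ) (hval : ∀ k, χ k = 0 ∨ χ k = 2⁻¹ ∨ χ k = 1)
    (hsum : ∑ k, χ k = 1) :
    ∃ i j, i ≤ j ∧
      ∀ k, χ k = ((if k = i then (1:ℝ) else 0) + (if k = j then 1 else 0)) / 2 := by
  have hnn : ∀ k, 0 ≤ χ k := fun k => by rcases hval k with h|h|h <;> rw [h] <;> norm_num
  have hex : ∃ i, χ i ≠ 0 := by
    by_contra h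
    push_neg at h
    rw [Finset.sum_eq_zero (fun k _ => h k)] at hsum
    norm_num at hsum
  obtain ⟨i, hi⟩ := hex
  have hrest : χ i + ∑ k ∈ univ.erase i, χ k = 1 := by
    rw [Finset.add_sum_erase _ _ (mem_univ i)]; exact hsum
  rcases hval i with h0 | hhalf | h1
  · exact absurd h0 hi
  · have hsum2 : ∑ k ∈ univ.erase i, χ k = 2⁻¹ := by rw [hhalf] at hrest; linarith
    have hex2 : ∃ j ∈ univ.erase i, χ j ≠ 0 := by
      by_contra h
      push_neg at h
      rw [Finset.sum_eq_zero h] at hsum2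
      norm_num at hsum2
    obtain ⟨j, hjmem, hj⟩ := hex2
    have hjne : j ≠ i := (Finset.mem_erase.mp hjmem).1
    have hjhalf : χ j = 2⁻¹ := by
      rcases hval j with h | h | h
      · exact absurd h hj
      · exact h
      · exfalso
        have hle : χ j ≤ ∑ k ∈ univ.erase i, χ k :=
          Finset.single_le_sum (fun k _ => hnn k) hjmem
        rw [h, hsum2] at hle; norm_num at hle
    have hzero : ∀ k, k ≠ i → k ≠ j → χ k = 0 := by
      have hsum3 : ∑ k ∈ (univ.erase i).erase j, χ k = 0 := by
        have := Finset.add_sum_erase _ χ hjmem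
        rw [hsum2, hjhalf] at this
        linarith
      intro k hki hkj
      exact (Finset.sum_eq_zero_iff_of_nonneg (fun k _ => hnn k)).mp hsum3 k
        (by simp [hki, hkj])
    have hform : ∀ k, χ k = ((if k = i then (1:ℝ) else 0) + (if k = j then 1 else 0)) / 2 := by
      intro k
      by_cases hki : k = i
      · subst hki
        rw [if_pos rfl, if_neg (Ne.symm hjne), hhalf]; norm_num
      · by_cases hkj : k = j
        · subst hkj
          rw [if_neg hki, if_pos rfl, hjhalf]; norm_num
        · rw [if_neg hki, if_neg hkj, hzero k hki hkj]; norm_num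
    rcases le_total i j with hij | hij
    · exact ⟨i, j, hij, fun k => by rw [hform k, add_comm]⟩
    · exact ⟨j, i, hij, fun k => by rw [hform k, add_comm]⟩
  · refine ⟨i, i, le_refl i, fun k => ?_⟩
    have hzero : ∀ k ∈ univ.erase i, χ k = 0 := by
      have hsum3 : ∑ k ∈ univ.erase i, χ k = 0 := by rw [h1] at hrest; linarith
      exact fun k hk => (Finset.sum_eq_zero_iff_of_nonneg (fun k _ => hnn k)).mp hsum3 k hk
    by_cases hki : k = i
    · subst hki; rw [if_pos rfl, h1]; norm_num
    · rw [if_neg hki, hzero k (Finset.mem_erase.mpr ⟨hki, mem_univ k⟩)]; norm_num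

private lemma sum_lam_chi {r : ℕ} (lam : Fin r → ℝ) (i j : Fin r) :
    ∑ k, lam k * (((if k = i then (1:ℝ) else 0) + (if k = j then 1 else 0)) / 2)
      = (lam i + lam j) / 2 := by
  have h : ∀ k, lam k * (((if k = i then (1:ℝ) else 0) + (if k = j then 1 else 0)) / 2)
      = (if k = i then lam k else 0) / 2 + (if k = j then lam k else 0) / 2 := by
    intro k
    split_ifs <;> ring
  rw [Finset.sum_congr rfl (fun k _ => h k), Finset.sum_add_distrib, ← Finset.sum_div,
    ← Finset.sum_div]
  simp [Finset.sum_ite_eq' univ i lam, Finset.sum_ite_eq' univ j lam]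
  ring

end Aux

/-- for `x = Σ λ_i c_i`, the range of `L_x` is the sum of the Peirce
spaces `J_{ij}` with `λ_i + λ_j ≠ 0`. -/
theorem stmt8 (J : Type*) [AddCommGroup J] [Module ℝ J] [FiniteDimensional ℝ J]
    (jmul : J →ₗ[ℝ] J →ₗ[ℝ] J)
    (hcomm : ∀ x y : J, jmul x y = jmul y x)
    (hjordan : ∀ x y : J, jmul (jmul x y) (jmul x x) = jmul x (jmul y (jmul x x)))
    (one : J) (hone : ∀ x : J, jmul one x = x)
    (hpos : ∀ x : J, x ≠ 0 → 0 < tauF jmul x x)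
    (r : ℕ) (c : Fin r → J) (hframe : IsJordanFrame jmul one c)
    (lam : Fin r → ℝ) :
    LinearMap.range (jmul (∑ i, lam i • c i)) =
      ⨆ (i : Fin r) (j : Fin r) (_ : i ≤ j) (_ : lam i + lam j ≠ 0),
        Peirce jmul c i j := by
  obtain ⟨hprim, horth, hsum_one⟩ := hframe
  have hidem : ∀ i, jmul (c i) (c i) = c i := fun i => (hprim i).1
  have hcube : ∀ k, (jmul (c k) * jmul (c k) * jmul (c k)
      + jmul (c k) * jmul (c k) * jmul (c k) + jmul (c k) : Module.End ℝ J)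
      = jmul (c k) * jmul (c k) + jmul (c k) * jmul (c k) + jmul (c k) * jmul (c k) :=
    fun k => cubic hcomm hjordan (hidem k)
  have hpair : Pairwise fun k l : Fin r =>
      Commute ((jmul (c k) : Module.End ℝ J)) (jmul (c l)) :=
    fun k l hkl => comm_of_orth hcomm hjordan (hidem k) (horth k l hkl)
  have htop : ∀ k, ⨆ μ : ℝ, Module.End.maxGenEigenspace (jmul (c k)) μ = ⊤ :=
    fun k => sup_eigen_top _ (hcube k)
  have hsim :=
    Module.End.iSup_iInf_maxGenEigenspace_eq_top_of_iSup_maxGenEigenspace_eq_top_of_commute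
      (fun k : Fin r => (jmul (c k) : Module.End ℝ J)) hpair htop
  have hss : ∀ k, Module.End.IsFinitelySemisimple (jmul (c k) : Module.End ℝ J) :=
    fun k => semisimple_of_cubic _ (hcube k)
  have hsim' : ⨆ χ : Fin r → ℝ, ⨅ k, Module.End.eigenspace (jmul (c k)) (χ k) = ⊤ := by
    rw [← hsim]
    exact iSup_congr fun χ => iInf_congr fun k =>
      (Module.End.IsFinitelySemisimple.maxGenEigenspace_eq_eigenspace (hss k) _).symm
  have hz_jmul : ∀ (χ : Fin r → ℝ) (z : J), (∀ k, jmul (c k) z = χ k • z) →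
      jmul (∑ i, lam i • c i) z = (∑ k, lam k * χ k) • z := by
    intro χ z hz
    rw [map_sum, LinearMap.sum_apply]
    have h : ∀ k, (jmul (lam k • c k)) z = (lam k * χ k) • z := by
      intro k
      rw [map_smul, LinearMap.smul_apply, hz k, smul_smul]
    rw [Finset.sum_congr rfl fun k _ => h k, ← Finset.sum_smul]
  have hPeirce_mem : ∀ (i j : Fin r) (z : J), z ∈ Peirce jmul c i j ↔
      ∀ k, jmul (c k) z
        = (((if k = i then (1:ℝ) else 0) + (if k = j then 1 else 0)) / 2) • z := by
    intro i j z
    simp only [Peirce, Submodule.mem_iInf, LinearMap.mem_ker, LinearMap.sub_apply,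
      LinearMap.smul_apply, LinearMap.id_apply, sub_eq_zero]
  apply le_antisymm
  · rw [LinearMap.range_eq_map, ← hsim', Submodule.map_iSup]
    refine iSup_le fun χ => ?_
    intro w hw
    obtain ⟨z, hz, rfl⟩ := Submodule.mem_map.mp hw
    have hz' : ∀ k, jmul (c k) z = χ k • z := fun k =>
      Module.End.mem_eigenspace_iff.mp ((Submodule.mem_iInf _).mp hz k)
    by_cases hz0 : z = 0
    · subst hz0
      rw [map_zero]
      exact Submodule.zero_mem _
    have hval : ∀ k, χ k = 0 ∨ χ k = 2⁻¹ ∨ χ k = 1 := by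
      intro k
      have h3 := LinearMap.congr_fun (hcube k) z
      simp only [LinearMap.add_apply, Module.End.mul_apply, hz' k, map_smul, smul_smul] at h3
      have e2 : (χ k * (χ k * χ k) + χ k * (χ k * χ k) + χ k
          - (χ k * χ k + χ k * χ k + χ k * χ k)) • z = 0 := by
        linear_combination (norm := module) h3
      have e3 : χ k * (χ k * χ k) + χ k * (χ k * χ k) + χ k
          - (χ k * χ k + χ k * χ k + χ k * χ k) = 0 := by
        rcases smul_eq_zero.mp e2 with h | h
        · exact h
        · exact absurd h hz0
      have e4 : χ k * (2 * χ k - 1) * (χ k - 1) = 0 := by linear_combination e3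
      rcases mul_eq_zero.mp e4 with h | h
      · rcases mul_eq_zero.mp h with h' | h'
        · exact Or.inl h'
        · exact Or.inr (Or.inl (by linarith))
      · exact Or.inr (Or.inr (by linarith))
    have hsum1 : ∑ k, χ k = 1 := by
      have h5 : jmul (∑ i, c i) z = z := by rw [hsum_one]; exact hone z
      rw [map_sum, LinearMap.sum_apply,
        Finset.sum_congr rfl (fun k _ => hz' k), ← Finset.sum_smul] at h5
      by_contra hne
      have h6 : (∑ k, χ k - 1) • z = 0 := by rw [sub_smul, one_smul, h5, sub_self]
      rcases smul_eq_zero.mp h6 with h | h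
      · exact hne (by linarith)
      · exact hz0 h
    obtain ⟨i, j, hij, hform⟩ := chi_shape χ hval hsum1
    have hzP : z ∈ Peirce jmul c i j :=
      (hPeirce_mem i j z).mpr (fun k => by rw [hz' k, hform k])
    have hsc : ∑ k, lam k * χ k = (lam i + lam j) / 2 := by
      rw [Finset.sum_congr rfl (fun k _ => by rw [hform k]), sum_lam_chi]
    have hxz : jmul (∑ i, lam i • c i) z = ((lam i + lam j) / 2) • z := by
      rw [hz_jmul χ z hz', hsc]
    rw [hxz]
    by_cases hlij : lam i + lam j = 0
    · rw [hlij]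
      norm_num
    · have hle : Peirce jmul c i j ≤
          ⨆ (i : Fin r) (j : Fin r) (_ : i ≤ j) (_ : lam i + lam j ≠ 0), Peirce jmul c i j :=
        le_iSup_of_le i (le_iSup_of_le j (le_iSup_of_le hij (le_iSup_of_le hlij le_rfl)))
      exact hle (Submodule.smul_mem _ _ hzP)
  · refine iSup_le fun i => iSup_le fun j => iSup_le fun hij => iSup_le fun hlij => ?_
    intro z hzP
    have hz' := (hPeirce_mem i j z).mp hzP
    have hxz : jmul (∑ i, lam i • c i) z = ((lam i + lam j) / 2) • z := by
      rw [hz_jmul _ z hz', sum_lam_chi]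
    refine ⟨(2 / (lam i + lam j)) • z, ?_⟩
    rw [map_smul, hxz, smul_smul]
    have hone' : 2 / (lam i + lam j) * ((lam i + lam j) / 2) = 1 := by
      field_simp
    rw [hone', one_smul]
end

section
/- Let J be a finite-dimensional, unital, positive real Jordan algebra, (c₁,…,c_r) a Jordan frame, λ₁,…,λ_r ∈ ℝ, and x = Σ_{i=1}^r λ_i c_i. Then g(J)·x = Σ_{1≤i≤j≤r, (λ_i,λ_j)≠(0,0)} J_{ij}, i.e., the orbit of x under the structure Lie algebra equals the sum of the Peirce spaces indexed by pairs at least one of whose coefficients is nonzero. -/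
open Finset

attribute [local instance 100] LieRing.ofAssociativeRing


section PrelimLemmas
variable {J : Type*} [AddCommGroup J] [Module ℝ J]
variable (jmul : J →ₗ[ℝ] J →ₗ[ℝ] J)



theorem jstar (hcomm : ∀ x y : J, jmul x y = jmul y x)
    (hjordan : ∀ x y : J, jmul (jmul x y) (jmul x x) = jmul x (jmul y (jmul x x)))
    (a b c d : J) :
    jmul a (jmul b (jmul c d)) + jmul c (jmul b (jmul a d)) + jmul d (jmul b (jmul a c)) =
      jmul (jmul a b) (jmul c d) + jmul (jmul c b) (jmul a d) + jmul (jmul d b) (jmul a c) := by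
  have h1 := hjordan (a + c + d) b
  have h2 := hjordan (a + c) b
  have h3 := hjordan (a + d) b
  have h4 := hjordan (c + d) b
  have h5 := hjordan a b
  have h6 := hjordan c b
  have h7 := hjordan d b
  simp only [map_add, LinearMap.add_apply, hcomm] at h1 h2 h3 h4 h5 h6 h7 ⊢
  linear_combination (norm := module) (-2⁻¹ : ℝ) • h1 + (2⁻¹ : ℝ) • h2 + (2⁻¹ : ℝ) • h3 +
    (2⁻¹ : ℝ) • h4 - (2⁻¹ : ℝ) • h5 - (2⁻¹ : ℝ) • h6 - (2⁻¹ : ℝ) • h7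

theorem jcube (hcomm : ∀ x y : J, jmul x y = jmul y x)
    (hjordan : ∀ x y : J, jmul (jmul x y) (jmul x x) = jmul x (jmul y (jmul x x)))
    {e : J} (he : jmul e e = e) (y : J) :
    (2:ℝ) • jmul e (jmul e (jmul e y)) = (3:ℝ) • jmul e (jmul e y) - jmul e y := by
  have h := jstar jmul hcomm hjordan e e e y
  simp only [he, hcomm] at h ⊢
  linear_combination (norm := module) h





theorem jorth_comm (hcomm : ∀ x y : J, jmul x y = jmul y x)
    (hjordan : ∀ x y : J, jmul (jmul x y) (jmul x x) = jmul x (jmul y (jmul x x)))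
    {e f : J} (he : jmul e e = e) (hf : jmul f f = f) (hef : jmul e f = 0) (y : J) :
    jmul e (jmul f y) = jmul f (jmul e y) := by
  have cube : ∀ z : J, (2:ℝ) • jmul e (jmul e (jmul e z)) = (3:ℝ) • jmul e (jmul e z) - jmul e z :=
    fun z => jcube jmul hcomm hjordan he z
  have hfe : jmul f e = 0 := by rw [hcomm]; exact hef
  -- (i): E²F z + F E² z = EF z
  have hi : ∀ z : J, jmul e (jmul e (jmul f z)) + jmul f (jmul e (jmul e z)) = jmul e (jmul f z) := by
    intro z
    have h := jstar jmul hcomm hjordan e e f z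
    simp only [he, hef, hfe, map_zero, LinearMap.zero_apply, hcomm] at h
    linear_combination (norm := module) h
  -- (ii): 2 EFE z = EF z
  have hii : ∀ z : J, (2:ℝ) • jmul e (jmul f (jmul e z)) = jmul e (jmul f z) := by
    intro z
    have h := jstar jmul hcomm hjordan e f e z
    simp only [he, hef, hfe, map_zero, LinearMap.zero_apply, hcomm] at h
    linear_combination (norm := module) h
  -- s1 : E²FE + FE³ = EFE  (hi at (e∘z))
  have s1 := hi (jmul e y)
  -- s3 : 2 E²FE = E²F   (E applied to hii)
  have s3 : (2:ℝ) • jmul e (jmul e (jmul f (jmul e y))) = jmul e (jmul e (jmul f y)) := by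
    have := congrArg (jmul e) (hii y)
    simpa only [map_smul] using this
  -- s4 : 2 FE³ = 3 FE² - FE  (F applied to cube)
  have s4 : (2:ℝ) • jmul f (jmul e (jmul e (jmul e y))) =
      (3:ℝ) • jmul f (jmul e (jmul e y)) - jmul f (jmul e y) := by
    have := congrArg (jmul f) (cube y)
    simpa only [map_smul, map_sub] using this
  -- α : E²F + 3 FE² - FE = 2 EF - ... combine 2*s1 with s3,s4, hii y:
  -- 2 E²FE + 2 FE³ = 2 EFE  => E²F + (3FE² - FE) = EF
  have alpha : jmul e (jmul e (jmul f y)) + (3:ℝ) • jmul f (jmul e (jmul e y)) - jmul f (jmul e y)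
      = jmul e (jmul f y) := by
    linear_combination (norm := module) (2:ℝ) • s1 - s3 - s4 + hii y
  -- (∗1) : 2 FE² = FE
  have star1 : (2:ℝ) • jmul f (jmul e (jmul e y)) = jmul f (jmul e y) := by
    linear_combination (norm := module) alpha - hi y
  -- s5 : E applied to hi y : E³F + EFE² = E²F
  have s5 : jmul e (jmul e (jmul e (jmul f y))) + jmul e (jmul f (jmul e (jmul e y)))
      = jmul e (jmul e (jmul f y)) := by
    have := congrArg (jmul e) (hi y)
    simpa only [map_add] using this
  -- s6 : 4 EFE² = EF : hii (e∘y) : 2 EFE² = EFE, and 2 EFE = EF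
  have s6 : (4:ℝ) • jmul e (jmul f (jmul e (jmul e y))) = jmul e (jmul f y) := by
    linear_combination (norm := module) (2:ℝ) • hii (jmul e y) + hii y
  -- s7 : cube at (f∘y) : 2 E³F = 3 E²F - EF
  have s7 := cube (jmul f y)
  -- (∗2) : 2 E²F = EF : from 2*s5 : 2E³F + 2EFE² = 2E²F
  have star2 : (2:ℝ) • jmul e (jmul e (jmul f y)) = jmul e (jmul f y) := by
    linear_combination (norm := module) (4:ℝ) • s5 - (2:ℝ) • s7 - s6
  -- finish : hi : E²F + FE² = EF, star2: E²F = EF/2 ⇒ FE² = EF/2 ; star1 : FE² = FE/2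
  linear_combination (norm := module) (-2:ℝ) • hi y + star2 + star1

theorem jDid (hcomm : ∀ x y : J, jmul x y = jmul y x)
    (hjordan : ∀ x y : J, jmul (jmul x y) (jmul x x) = jmul x (jmul y (jmul x x)))
    (a b u y : J) :
    jmul (jmul a (jmul b u)) y - jmul (jmul b (jmul a u)) y =
      jmul a (jmul b (jmul u y)) - jmul b (jmul a (jmul u y))
        - jmul u (jmul a (jmul b y)) + jmul u (jmul b (jmul a y)) := by
  have h1 := jstar jmul hcomm hjordan a b u y
  have h2 := jstar jmul hcomm hjordan b a u y
  simp only [hcomm] at h1 h2 ⊢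
  linear_combination (norm := module) h2 - h1


theorem jDidEnd (hcomm : ∀ x y : J, jmul x y = jmul y x)
    (hjordan : ∀ x y : J, jmul (jmul x y) (jmul x x) = jmul x (jmul y (jmul x x)))
    (a b u : J) :
    ⁅⁅(jmul a : Module.End ℝ J), jmul b⁆, jmul u⁆ =
      jmul (jmul a (jmul b u) - jmul b (jmul a u)) := by
  ext y
  simp only [Ring.lie_def, LinearMap.sub_apply, Module.End.mul_apply, map_sub]
  linear_combination (norm := module) - jDid jmul hcomm hjordan a b u y

theorem trace_cyc [FiniteDimensional ℝ J] (hcomm : ∀ x y : J, jmul x y = jmul y x)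
    (hjordan : ∀ x y : J, jmul (jmul x y) (jmul x x) = jmul x (jmul y (jmul x x)))
    (a b u : J) :
    LinearMap.trace ℝ J (jmul (jmul a (jmul b u))) =
      LinearMap.trace ℝ J (jmul (jmul b (jmul a u))) := by
  have h := congrArg (LinearMap.trace ℝ J) (jDidEnd jmul hcomm hjordan a b u)
  have h2 : LinearMap.trace ℝ J ⁅⁅(jmul a : Module.End ℝ J), jmul b⁆, jmul u⁆ = 0 := by
    rw [Ring.lie_def, map_sub, LinearMap.trace_mul_comm]
    exact sub_self _
  rw [h2] at h
  simp only [map_sub] at h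
  linarith [h]

theorem tau_assoc [FiniteDimensional ℝ J] (hcomm : ∀ x y : J, jmul x y = jmul y x)
    (hjordan : ∀ x y : J, jmul (jmul x y) (jmul x x) = jmul x (jmul y (jmul x x)))
    (u v w : J) : tauF jmul (jmul u v) w = tauF jmul v (jmul u w) := by
  unfold tauF
  have e1 : jmul (jmul u v) w = jmul w (jmul u v) := hcomm _ _
  rw [e1, trace_cyc jmul hcomm hjordan w u v, trace_cyc jmul hcomm hjordan v u w,
    hcomm w v]

theorem mem_Peirce {r : ℕ} (c : Fin r → J) (i j : Fin r) (y : J) :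
    y ∈ Peirce jmul c i j ↔ ∀ k, jmul (c k) y =
      (((if k = i then (1:ℝ) else 0) + (if k = j then 1 else 0)) / 2) • y := by
  simp only [Peirce, Submodule.mem_iInf, LinearMap.mem_ker, LinearMap.sub_apply,
    LinearMap.smul_apply, LinearMap.id_apply, sub_eq_zero]
theorem peirce_top (hcomm : ∀ x y : J, jmul x y = jmul y x)
    (hjordan : ∀ x y : J, jmul (jmul x y) (jmul x x) = jmul x (jmul y (jmul x x)))
    (one : J) (hone : ∀ x : J, jmul one x = x) {r : ℕ} (c : Fin r → J)
    (hidem : ∀ i, jmul (c i) (c i) = c i)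
    (horth : ∀ i j, i ≠ j → jmul (c i) (c j) = 0)
    (hsum : (∑ i, c i) = one) :
    (⨆ i, ⨆ j, ⨆ (_ : i ≤ j), Peirce jmul c i j) = ⊤ := by
  classical
  set μ : Fin 3 → ℝ := ![0, 1/2, 1] with hμdef
  have hμ0 : μ 0 = 0 := rfl
  have hμ1 : μ 1 = 1/2 := rfl
  have hμ2 : μ 2 = 1 := rfl
  set Kp : Finset (Fin r) → (Fin r → Fin 3) → Submodule ℝ J := fun s ν =>
    ⨅ k ∈ s, LinearMap.ker (jmul (c k) - μ (ν k) • LinearMap.id) with hKp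
  have hmem : ∀ (s : Finset (Fin r)) (ν : Fin r → Fin 3) (y : J),
      y ∈ Kp s ν ↔ ∀ k ∈ s, jmul (c k) y = μ (ν k) • y := by
    intro s ν y
    simp [hKp, Submodule.mem_iInf, LinearMap.mem_ker, LinearMap.sub_apply,
      LinearMap.smul_apply, LinearMap.id_apply, sub_eq_zero]
  have main : ∀ s : Finset (Fin r), ∀ y : J, y ∈ ⨆ ν : Fin r → Fin 3, Kp s ν := by
    intro s
    induction s using Finset.induction_on with
    | empty =>
      intro y
      refine Submodule.mem_iSup_of_mem (fun _ => 0) ?_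
      rw [hmem]
      exact fun k hk => absurd hk (Finset.notMem_empty k)
    | @insert a s ha ih =>
      intro y
      refine Submodule.iSup_induction (motive := fun w => w ∈ ⨆ ν', Kp (insert a s) ν') _ (ih y) ?_
        (Submodule.zero_mem _) (fun z w hz hw => Submodule.add_mem _ hz hw)
      intro ν z hz
      have hcube := jcube jmul hcomm hjordan (hidem a)
      have hKpE : ∀ w, w ∈ Kp s ν → jmul (c a) w ∈ Kp s ν := by
        intro w hw
        rw [hmem] at hw ⊢
        intro k hk
        have hka : k ≠ a := fun h => ha (h ▸ hk)
        rw [jorth_comm jmul hcomm hjordan (hidem k) (hidem a) (horth k a hka) w,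
          hw k hk, map_smul]
      have hup : ∀ (t : Fin 3) (w : J), w ∈ Kp s ν → jmul (c a) w = μ t • w →
          w ∈ Kp (insert a s) (Function.update ν a t) := by
        intro t w hw hew
        rw [hmem]
        intro k hk
        rcases Finset.mem_insert.1 hk with rfl | hks
        · rwa [Function.update_self]
        · have hka : k ≠ a := fun h => ha (h ▸ hks)
          rw [Function.update_of_ne hka]
          exact (hmem s ν w).1 hw k hks
      have hz1 : jmul (c a) ((2:ℝ) • jmul (c a) (jmul (c a) z) - jmul (c a) z)
          = μ 2 • ((2:ℝ) • jmul (c a) (jmul (c a) z) - jmul (c a) z) := by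
        rw [hμ2]
        simp only [map_sub, map_smul]
        linear_combination (norm := module) hcube z
      have hzh : jmul (c a) ((4:ℝ) • jmul (c a) z - (4:ℝ) • jmul (c a) (jmul (c a) z))
          = μ 1 • ((4:ℝ) • jmul (c a) z - (4:ℝ) • jmul (c a) (jmul (c a) z)) := by
        rw [hμ1]
        simp only [map_sub, map_smul]
        linear_combination (norm := module) (-2:ℝ) • hcube z
      have hz0 : jmul (c a) (z - (3:ℝ) • jmul (c a) z + (2:ℝ) • jmul (c a) (jmul (c a) z))
          = μ 0 • (z - (3:ℝ) • jmul (c a) z + (2:ℝ) • jmul (c a) (jmul (c a) z)) := by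
        rw [hμ0]
        simp only [map_sub, map_smul, map_add]
        linear_combination (norm := module) hcube z
      have hzdec : z = (z - (3:ℝ) • jmul (c a) z + (2:ℝ) • jmul (c a) (jmul (c a) z))
          + ((4:ℝ) • jmul (c a) z - (4:ℝ) • jmul (c a) (jmul (c a) z))
          + ((2:ℝ) • jmul (c a) (jmul (c a) z) - jmul (c a) z) := by module
      rw [hzdec]
      have mE1 : jmul (c a) z ∈ Kp s ν := hKpE _ hz
      have mE2 : jmul (c a) (jmul (c a) z) ∈ Kp s ν := hKpE _ mE1
      refine Submodule.add_mem _ (Submodule.add_mem _ ?_ ?_) ?_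
      · exact Submodule.mem_iSup_of_mem (Function.update ν a 0)
          (hup 0 _ (Submodule.add_mem _ (Submodule.sub_mem _ hz (Submodule.smul_mem _ _ mE1))
            (Submodule.smul_mem _ _ mE2)) hz0)
      · exact Submodule.mem_iSup_of_mem (Function.update ν a 1)
          (hup 1 _ (Submodule.sub_mem _ (Submodule.smul_mem _ _ mE1)
            (Submodule.smul_mem _ _ mE2)) hzh)
      · exact Submodule.mem_iSup_of_mem (Function.update ν a 2)
          (hup 2 _ (Submodule.sub_mem _ (Submodule.smul_mem _ _ mE2) mE1) hz1)
  refine top_unique ?_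
  intro y _
  refine Submodule.iSup_induction
    (motive := fun w => w ∈ ⨆ i, ⨆ j, ⨆ (_ : i ≤ j), Peirce jmul c i j) _ (main Finset.univ y) ?_
    (Submodule.zero_mem _) (fun z w hz hw => Submodule.add_mem _ hz hw)
  intro ν z hz
  have hk : ∀ k, jmul (c k) z = μ (ν k) • z :=
    fun k => (hmem _ _ _).1 hz k (Finset.mem_univ k)
  have hs : (∑ k, μ (ν k)) • z = z := by
    calc (∑ k, μ (ν k)) • z = ∑ k, μ (ν k) • z := Finset.sum_smul
      _ = ∑ k, jmul (c k) z := Finset.sum_congr rfl (fun k _ => (hk k).symm)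
      _ = (∑ k, jmul (c k)) z := (LinearMap.sum_apply _ _ _).symm
      _ = jmul (∑ k, c k) z := by rw [map_sum]
      _ = z := by rw [hsum]; exact hone z
  by_cases h1 : (∑ k, μ (ν k)) = 1
  · -- combinatorics
    set A : Finset (Fin r) := Finset.univ.filter (fun k => ν k = 2) with hA
    set B : Finset (Fin r) := Finset.univ.filter (fun k => ν k = 1) with hB
    have hAmem : ∀ k, k ∈ A ↔ ν k = 2 := by intro k; simp [hA]
    have hBmem : ∀ k, k ∈ B ↔ ν k = 1 := by intro k; simp [hB]
    have key : 2 * A.card + B.card = 2 := by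
      have h2 : ((2 * A.card + B.card : ℕ) : ℝ) = 2 := by
        push_cast
        have hterm : ∀ k : Fin r, (2:ℝ) * μ (ν k) =
            (if ν k = 2 then (2:ℝ) else 0) + (if ν k = 1 then (1:ℝ) else 0) := by
          intro k
          rcases (by omega : ν k = 0 ∨ ν k = 1 ∨ ν k = 2) with h | h | h <;>
            rw [h] <;> simp [hμ0, hμ1, hμ2] <;> norm_num
        calc (2 * (A.card:ℝ) + B.card)
            = ∑ k : Fin r, ((if ν k = 2 then (2:ℝ) else 0) + (if ν k = 1 then (1:ℝ) else 0)) := by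
              rw [Finset.sum_add_distrib, ← Finset.sum_filter, ← Finset.sum_filter,
                Finset.sum_const, Finset.sum_const, ← hA, ← hB]
              simp [nsmul_eq_mul]
              ring
          _ = ∑ k : Fin r, (2:ℝ) * μ (ν k) := Finset.sum_congr rfl (fun k _ => (hterm k).symm)
          _ = 2 * ∑ k, μ (ν k) := by rw [Finset.mul_sum]
          _ = 2 := by rw [h1, mul_one]
      exact_mod_cast h2
    have hAB : (A.card = 1 ∧ B.card = 0) ∨ (A.card = 0 ∧ B.card = 2) := by omega
    rcases hAB with ⟨hA1, hB0⟩ | ⟨hA0, hB2⟩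
    · obtain ⟨i, hAi⟩ := Finset.card_eq_one.1 hA1
      have hzP : z ∈ Peirce jmul c i i := by
        rw [mem_Peirce]
        intro k
        rw [hk k]
        by_cases hki : k = i
        · have : ν k = 2 := (hAmem k).1 (by rw [hAi, hki]; exact Finset.mem_singleton_self i)
          rw [this, hμ2]
          norm_num [hki]
        · have h2 : ν k ≠ 2 := fun h => hki (Finset.mem_singleton.1 (hAi ▸ (hAmem k).2 h))
          have h1' : ν k ≠ 1 := fun h => absurd ((hBmem k).2 h)
            (by rw [Finset.card_eq_zero.1 hB0]; exact Finset.notMem_empty k)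
          have h0 : ν k = 0 := by omega
          rw [h0, hμ0]
          norm_num [hki]
      exact Submodule.mem_iSup_of_mem i (Submodule.mem_iSup_of_mem i
        (Submodule.mem_iSup_of_mem (le_refl i) hzP))
    · obtain ⟨i, j, hij, hBij⟩ := Finset.card_eq_two.1 hB2
      have hA0' : A = ∅ := Finset.card_eq_zero.1 hA0
      have hzP : ∀ p q : Fin r, p ≠ q → B = {p, q} → z ∈ Peirce jmul c p q := by
        intro p q hpq hBpq
        rw [mem_Peirce]
        intro k
        rw [hk k]
        by_cases hkp : k = p
        · have : ν k = 1 := (hBmem k).1 (by rw [hBpq, hkp]; exact Finset.mem_insert_self p {q})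
          rw [this, hμ1]
          norm_num [hkp, hpq]
        · by_cases hkq : k = q
          · have : ν k = 1 := (hBmem k).1
              (by rw [hBpq, hkq]; exact Finset.mem_insert_of_mem (Finset.mem_singleton_self q))
            rw [this, hμ1]
            norm_num [hkp, hkq, Ne.symm hpq]
          · have h1' : ν k ≠ 1 := fun h => by
              have := (hBmem k).2 h
              rw [hBpq] at this
              rcases Finset.mem_insert.1 this with h' | h'
              · exact hkp h'
              · exact hkq (Finset.mem_singleton.1 h')
            have h2 : ν k ≠ 2 := fun h => by
              have := (hAmem k).2 h
              rw [hA0'] at this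
              exact Finset.notMem_empty k this
            have h0 : ν k = 0 := by omega
            rw [h0, hμ0]
            norm_num [hkp, hkq]
      rcases le_total i j with h | h
      · exact Submodule.mem_iSup_of_mem i (Submodule.mem_iSup_of_mem j
          (Submodule.mem_iSup_of_mem h (hzP i j hij hBij)))
      · exact Submodule.mem_iSup_of_mem j (Submodule.mem_iSup_of_mem i
          (Submodule.mem_iSup_of_mem h (hzP j i hij.symm (by rw [hBij, Finset.pair_comm]))))
  · have hz0 : z = 0 := by
      have h0 : ((∑ k, μ (ν k)) - 1) • z = 0 := by rw [sub_smul, hs, one_smul, sub_self]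
      rcases smul_eq_zero.1 h0 with h | h
      · exact absurd (by linarith [sub_eq_zero.1 h] : (∑ k, μ (ν k)) = 1) h1
      · exact h
    rw [hz0]
    exact Submodule.zero_mem _

end PrelimLemmas

set_option maxHeartbeats 1000000

/-- for `x = Σ λ_i c_i`, the orbit `g(J)·x` of `x` under the structure
Lie algebra (the smallest Lie subalgebra of `End(J)` containing all `L_u`) equals the
sum of the Peirce spaces `J_{ij}` with `(λ_i, λ_j) ≠ (0,0)`. -/
theorem stmt10 (J : Type*) [AddCommGroup J] [Module ℝ J] [FiniteDimensional ℝ J]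
    (jmul : J →ₗ[ℝ] J →ₗ[ℝ] J)
    (hcomm : ∀ x y : J, jmul x y = jmul y x)
    (hjordan : ∀ x y : J, jmul (jmul x y) (jmul x x) = jmul x (jmul y (jmul x x)))
    (one : J) (hone : ∀ x : J, jmul one x = x)
    (hpos : ∀ x : J, x ≠ 0 → 0 < tauF jmul x x)
    (r : ℕ) (c : Fin r → J) (hframe : IsJordanFrame jmul one c)
    (lam : Fin r → ℝ) :
    {y : J | ∃ T ∈ LieSubalgebra.lieSpan ℝ (Module.End ℝ J)
        {S : Module.End ℝ J | ∃ u : J, S = jmul u}, y = T (∑ i, lam i • c i)} =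
      ((⨆ (i : Fin r) (j : Fin r) (_ : i ≤ j) (_ : ¬(lam i = 0 ∧ lam j = 0)),
        Peirce jmul c i j : Submodule ℝ J) : Set J) := by
  classical
  obtain ⟨hprim, horth, hsum⟩ := hframe
  have hidem : ∀ i, jmul (c i) (c i) = c i := fun i => (hprim i).1
  set x : J := ∑ i, lam i • c i with hx
  set tauB : J →ₗ[ℝ] J →ₗ[ℝ] ℝ := jmul.compr₂ ((LinearMap.trace ℝ J) ∘ₗ jmul) with htauB
  have htauB_eq : ∀ u v : J, tauB u v = tauF jmul u v := fun _ _ => rfl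
  have tassoc : ∀ u v w : J, tauB (jmul u v) w = tauB v (jmul u w) := by
    intro u v w
    rw [htauB_eq, htauB_eq]
    exact tau_assoc jmul hcomm hjordan u v w
  have tsymm : ∀ u v : J, tauB u v = tauB v u := by
    intro u v
    rw [htauB_eq, htauB_eq]
    unfold tauF
    rw [hcomm]
  set W : Submodule ℝ J := ⨆ (i : Fin r) (j : Fin r) (_ : i ≤ j)
      (_ : ¬(lam i = 0 ∧ lam j = 0)), Peirce jmul c i j with hW
  set C : Submodule ℝ J := ⨆ (i : Fin r) (j : Fin r) (_ : i ≤ j)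
      (_ : lam i = 0 ∧ lam j = 0), Peirce jmul c i j with hC
  have hWle : ∀ (i j : Fin r), i ≤ j → ¬(lam i = 0 ∧ lam j = 0) →
      Peirce jmul c i j ≤ W := by
    intro i j hij h
    rw [hW]
    exact le_iSup_of_le i (le_iSup_of_le j (le_iSup_of_le hij (le_iSup_of_le h (le_refl _))))
  have hCle : ∀ (i j : Fin r), i ≤ j → (lam i = 0 ∧ lam j = 0) →
      Peirce jmul c i j ≤ C := by
    intro i j hij h
    rw [hC]
    exact le_iSup_of_le i (le_iSup_of_le j (le_iSup_of_le hij (le_iSup_of_le h (le_refl _))))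
  -- c_m kills C when lam m ≠ 0
  have cw : ∀ m, lam m ≠ 0 → ∀ w ∈ C, jmul (c m) w = 0 := by
    intro m hm
    suffices h : C ≤ LinearMap.ker (jmul (c m)) by
      intro w hw
      exact LinearMap.mem_ker.1 (h hw)
    rw [hC]
    refine iSup_le fun i => iSup_le fun j => iSup_le fun hij => iSup_le fun hcold => ?_
    intro w hw
    rw [LinearMap.mem_ker]
    have hP := (mem_Peirce jmul c i j w).1 hw m
    have hmi : m ≠ i := fun he => hm (by rw [he]; exact hcold.1)
    have hmj : m ≠ j := fun he => hm (by rw [he]; exact hcold.2)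
    rw [hP]
    simp [hmi, hmj]
  -- x kills C
  have hxC : ∀ w ∈ C, jmul x w = 0 := by
    intro w hw
    have hexp : jmul x w = ∑ i, lam i • jmul (c i) w := by
      rw [hx, map_sum, LinearMap.sum_apply]
      exact Finset.sum_congr rfl fun i _ => by rw [map_smul, LinearMap.smul_apply]
    rw [hexp]
    refine Finset.sum_eq_zero fun i _ => ?_
    by_cases hi : lam i = 0
    · rw [hi, zero_smul]
    · rw [cw i hi w hw, smul_zero]
  -- c_i ∘ x = lam i • c i
  have hcx : ∀ i, jmul (c i) x = lam i • c i := by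
    intro i
    rw [hx, map_sum]
    rw [Finset.sum_eq_single i]
    · rw [map_smul, hidem]
    · intro k _ hki
      rw [map_smul, horth i k (fun h => hki h.symm), smul_zero]
    · intro h
      exact absurd (Finset.mem_univ i) h
  -- Peirce eigen-equation for x
  have hbx : ∀ (i j : Fin r) (b : J), b ∈ Peirce jmul c i j →
      jmul b x = ((lam i + lam j) / 2) • b := by
    intro i j b hb
    have hPb := (mem_Peirce jmul c i j b).1 hb
    rw [hcomm b x, hx]
    have hexp : jmul (∑ k, lam k • c k) b = ∑ k, lam k • jmul (c k) b := by
      rw [map_sum, LinearMap.sum_apply]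
      exact Finset.sum_congr rfl fun k _ => by rw [map_smul, LinearMap.smul_apply]
    rw [hexp]
    calc ∑ k, lam k • jmul (c k) b
        = ∑ k, (lam k * (((if k = i then (1:ℝ) else 0) + (if k = j then 1 else 0)) / 2)) • b :=
          Finset.sum_congr rfl fun k _ => by rw [hPb k, smul_smul]
      _ = (∑ k, lam k * (((if k = i then (1:ℝ) else 0) + (if k = j then 1 else 0)) / 2)) • b := by
          rw [Finset.sum_smul]
      _ = ((lam i + lam j) / 2) • b := by
          congr 1
          have hterm : ∀ k : Fin r,
              lam k * (((if k = i then (1:ℝ) else 0) + (if k = j then 1 else 0)) / 2)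
              = ((if k = i then lam k else 0) + (if k = j then lam k else 0)) / 2 := by
            intro k
            split_ifs <;> ring
          rw [Finset.sum_congr rfl fun k _ => hterm k, ← Finset.sum_div,
            Finset.sum_add_distrib, Finset.sum_ite_eq', Finset.sum_ite_eq']
          simp
  -- the Lie algebra g0
  set A : Set (Module.End ℝ J) := {S : Module.End ℝ J | ∃ u : J, S = jmul u} with hA
  set B2 : Set (Module.End ℝ J) :=
    {S : Module.End ℝ J | ∃ a b : J, S = ⁅(jmul a : Module.End ℝ J), jmul b⁆} with hB2
  set g0 : Submodule ℝ (Module.End ℝ J) := Submodule.span ℝ (A ∪ B2) with hg0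
  have hDidE : ∀ a b u : J, ⁅⁅(jmul a : Module.End ℝ J), jmul b⁆, jmul u⁆ =
      jmul (jmul a (jmul b u) - jmul b (jmul a u)) := jDidEnd jmul hcomm hjordan
  have hbr : ∀ S ∈ A ∪ B2, ∀ T ∈ A ∪ B2, ⁅S, T⁆ ∈ g0 := by
    rintro S (⟨u, rfl⟩ | ⟨a, b, rfl⟩) T hT
    · rcases hT with ⟨v, rfl⟩ | ⟨a, b, rfl⟩
      · exact Submodule.subset_span (Or.inr ⟨u, v, rfl⟩)
      · have hskew0 : ⁅(jmul u : Module.End ℝ J), ⁅(jmul a : Module.End ℝ J), jmul b⁆⁆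
            = jmul (-(jmul a (jmul b u) - jmul b (jmul a u))) := by
          rw [map_neg, ← hDidE a b u, ← lie_skew]
        rw [hskew0]
        exact Submodule.subset_span (Or.inl ⟨_, rfl⟩)
    · rcases hT with ⟨v, rfl⟩ | ⟨a', b', rfl⟩
      · rw [hDidE]
        exact Submodule.subset_span (Or.inl ⟨_, rfl⟩)
      · rw [leibniz_lie]
        refine Submodule.add_mem _ ?_ ?_
        · rw [hDidE]
          exact Submodule.subset_span (Or.inr ⟨_, _, rfl⟩)
        · exact Submodule.subset_span (Or.inr ⟨_, _, by rw [hDidE]⟩)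
  have hclosed : ∀ S ∈ g0, ∀ T ∈ g0, ⁅S, T⁆ ∈ g0 := by
    intro S hS
    induction hS using Submodule.span_induction with
    | mem S0 hS0 =>
      intro T hT
      induction hT using Submodule.span_induction with
      | mem T0 hT0 => exact hbr _ hS0 _ hT0
      | zero => rw [lie_zero]; exact g0.zero_mem
      | add T1 T2 h1 h2 ih1 ih2 => rw [lie_add]; exact g0.add_mem ih1 ih2
      | smul a T1 h1 ih => rw [lie_smul]; exact g0.smul_mem a ih
    | zero => intro T hT; rw [zero_lie]; exact g0.zero_mem
    | add S1 S2 h1 h2 ih1 ih2 => intro T hT; rw [add_lie]; exact g0.add_mem (ih1 T hT) (ih2 T hT)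
    | smul a S1 h1 ih => intro T hT; rw [smul_lie]; exact g0.smul_mem a (ih T hT)
  set K : LieSubalgebra ℝ (Module.End ℝ J) :=
    { g0 with lie_mem' := fun {S T} hS hT => hclosed S hS T hT } with hK
  have hGK : LieSubalgebra.lieSpan ℝ (Module.End ℝ J) A ≤ K :=
    LieSubalgebra.lieSpan_le.2 (fun S hS => Submodule.subset_span (Or.inl hS))
  set ev : Module.End ℝ J →ₗ[ℝ] J :=
    { toFun := fun T => T x, map_add' := fun f g => rfl, map_smul' := fun a f => rfl } with hev
  have hevapp : ∀ T : Module.End ℝ J, ev T = T x := fun _ => rfl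
  set G : Submodule ℝ (Module.End ℝ J) :=
    (LieSubalgebra.lieSpan ℝ (Module.End ℝ J) A).toSubmodule with hG
  have hsetEq : {y : J | ∃ T ∈ LieSubalgebra.lieSpan ℝ (Module.End ℝ J) A, y = T x}
      = ↑(Submodule.map ev G) := by
    ext y
    simp only [Set.mem_setOf_eq, SetLike.mem_coe, Submodule.mem_map, hG,
      LieSubalgebra.mem_toSubmodule]
    constructor
    · rintro ⟨T, hT, rfl⟩
      exact ⟨T, hT, rfl⟩
    · rintro ⟨T, hT, rfl⟩
      exact ⟨T, hT, rfl⟩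
  -- ⊇ : W ≤ map ev G
  have hW_le : W ≤ Submodule.map ev G := by
    rw [hW]
    refine iSup_le fun i => iSup_le fun j => iSup_le fun hij => iSup_le fun hhot => ?_
    intro b hb
    have hbx' := hbx i j b hb
    by_cases hs0 : lam i + lam j = 0
    · have hli : lam i ≠ 0 := fun h => hhot ⟨h, by linarith⟩
      have hijne : i ≠ j := fun h => hli (by subst h; linarith)
      refine ⟨(-2 / lam i) • ⁅(jmul (c i) : Module.End ℝ J), jmul b⁆, ?_, ?_⟩
      · refine Submodule.smul_mem _ _ ?_
        rw [hG, LieSubalgebra.mem_toSubmodule]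
        exact LieSubalgebra.lie_mem _ (LieSubalgebra.subset_lieSpan ⟨c i, rfl⟩)
          (LieSubalgebra.subset_lieSpan ⟨b, rfl⟩)
      · have hlie : ⁅(jmul (c i) : Module.End ℝ J), jmul b⁆ x
            = jmul (c i) (jmul b x) - jmul b (jmul (c i) x) := by
          simp [Ring.lie_def, LinearMap.sub_apply, Module.End.mul_apply]
        have hb0 : jmul b x = 0 := by
          rw [hbx', hs0]
          norm_num
        have hcb : jmul (c i) b = (1/2 : ℝ) • b := by
          have h := (mem_Peirce jmul c i j b).1 hb i
          rw [if_pos rfl, if_neg hijne] at h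
          rw [h]
          norm_num
        show (-2 / lam i) • (⁅(jmul (c i) : Module.End ℝ J), jmul b⁆ x) = b
        rw [hlie, hb0, map_zero, hcx i, zero_sub, map_smul, hcomm b (c i), hcb]
        rw [smul_neg, smul_smul, smul_smul,
          show (-2 / lam i * lam i * (1/2) : ℝ) = -1 from by field_simp, neg_smul, neg_neg,
          one_smul]
    · refine ⟨(2 / (lam i + lam j)) • (jmul b : Module.End ℝ J), ?_, ?_⟩
      · refine Submodule.smul_mem _ _ ?_
        rw [hG, LieSubalgebra.mem_toSubmodule]
        exact LieSubalgebra.subset_lieSpan ⟨b, rfl⟩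
      · show (2 / (lam i + lam j)) • (jmul b x) = b
        rw [hbx', smul_smul, show 2 / (lam i + lam j) * ((lam i + lam j)/2) = 1 by field_simp,
          one_smul]
  -- the tau-orthogonal complement of C
  set P : Submodule ℝ J := ⨅ (w : ↥C), LinearMap.ker (tauB.flip (w : J)) with hP
  have hPmem : ∀ z : J, z ∈ P ↔ ∀ w ∈ C, tauB z w = 0 := by
    intro z
    rw [hP, Submodule.mem_iInf]
    constructor
    · intro h w hw
      have := h ⟨w, hw⟩
      rwa [LinearMap.mem_ker, LinearMap.flip_apply] at this
    · intro h w
      rw [LinearMap.mem_ker, LinearMap.flip_apply]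
      exact h w w.2
  -- W ≤ P (orthogonality of distinct Peirce spaces)
  have hWP : W ≤ P := by
    rw [hW]
    refine iSup_le fun i => iSup_le fun j => iSup_le fun hij => iSup_le fun hhot => ?_
    intro u hu
    rw [hPmem]
    suffices h : C ≤ LinearMap.ker (tauB u) by
      intro w hw
      exact LinearMap.mem_ker.1 (h hw)
    rw [hC]
    refine iSup_le fun k => iSup_le fun l => iSup_le fun hkl => iSup_le fun hcold => ?_
    intro w hw
    rw [LinearMap.mem_ker]
    have hkey : ∀ m : Fin r, lam m ≠ 0 → (m = i ∨ m = j) → tauB u w = 0 := by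
      intro m hm hmij
      have hul := (mem_Peirce jmul c i j u).1 hu m
      have hwl := (mem_Peirce jmul c k l w).1 hw m
      have hmk : m ≠ k := fun he => hm (by rw [he]; exact hcold.1)
      have hml : m ≠ l := fun he => hm (by rw [he]; exact hcold.2)
      rw [if_neg hmk, if_neg hml] at hwl
      norm_num at hwl
      have h3 := tassoc (c m) u w
      rw [hul, hwl, map_zero, map_smul, LinearMap.smul_apply, smul_eq_mul] at h3
      have hco : ((if m = i then (1:ℝ) else 0) + (if m = j then 1 else 0)) / 2 ≠ 0 := by
        rcases hmij with rfl | rfl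
        · rw [if_pos rfl]
          split_ifs <;> norm_num
        · rw [if_pos rfl]
          split_ifs <;> norm_num
      exact (mul_eq_zero.1 h3).resolve_left hco
    rcases not_and_or.1 hhot with h | h
    · exact hkey i h (Or.inl rfl)
    · exact hkey j h (Or.inr rfl)
  -- skew-adjointness of inner derivations
  have hskew : ∀ a b u v : J,
      tauB (jmul a (jmul b u) - jmul b (jmul a u)) v
        = - tauB u (jmul a (jmul b v) - jmul b (jmul a v)) := by
    intro a b u v
    have h1 : tauB (jmul a (jmul b u)) v = tauB u (jmul b (jmul a v)) := by
      rw [tassoc a (jmul b u) v, tassoc b u (jmul a v)]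
    have h2 : tauB (jmul b (jmul a u)) v = tauB u (jmul a (jmul b v)) := by
      rw [tassoc b (jmul a u) v, tassoc a u (jmul b v)]
    rw [map_sub, LinearMap.sub_apply, map_sub, h1, h2]
    ring
  -- τ(c m, D w) = 0 for w ∈ C, lam m ≠ 0
  have hDw : ∀ a b : J, ∀ m : Fin r, lam m ≠ 0 → ∀ w ∈ C,
      tauB (c m) (jmul a (jmul b w) - jmul b (jmul a w)) = 0 := by
    intro a b m hm w hw
    have h0 : jmul (c m) w = 0 := cw m hm w hw
    have hder : jmul (c m) (jmul a (jmul b w) - jmul b (jmul a w))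
        = - jmul (jmul a (jmul b (c m)) - jmul b (jmul a (c m))) w := by
      have hdid := jDid jmul hcomm hjordan a b (c m) w
      rw [h0] at hdid
      simp only [map_zero] at hdid
      simp only [map_sub, LinearMap.sub_apply, hcomm] at hdid ⊢
      linear_combination (norm := module) hdid
    have hhalf : jmul (c m) (jmul a (jmul b (c m)) - jmul b (jmul a (c m)))
        = (1/2 : ℝ) • (jmul a (jmul b (c m)) - jmul b (jmul a (c m))) := by
      have hdid := jDid jmul hcomm hjordan a b (c m) (c m)
      rw [hidem m] at hdid
      simp only [map_sub, smul_sub, hcomm] at hdid ⊢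
      linear_combination (norm := module) (2⁻¹ : ℝ) • hdid
    have e1 : tauB (c m) (jmul a (jmul b w) - jmul b (jmul a w))
        = tauB (c m) (jmul (c m) (jmul a (jmul b w) - jmul b (jmul a w))) := by
      conv_lhs => rw [← hidem m]
      exact tassoc (c m) (c m) _
    rw [hder, map_neg] at e1
    have e2 : tauB (c m) (jmul (jmul a (jmul b (c m)) - jmul b (jmul a (c m))) w)
        = (1/2 : ℝ) * tauB (jmul a (jmul b (c m)) - jmul b (jmul a (c m))) w := by
      rw [tsymm, tassoc (jmul a (jmul b (c m)) - jmul b (jmul a (c m))) w (c m),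
        hcomm _ (c m), hhalf, map_smul, smul_eq_mul, tsymm w _]
    have e3 : tauB (jmul a (jmul b (c m)) - jmul b (jmul a (c m))) w
        = - tauB (c m) (jmul a (jmul b w) - jmul b (jmul a w)) := hskew a b (c m) w
    rw [e2, e3] at e1
    linarith
  -- images of generators are in P
  have himg : ∀ T ∈ A ∪ B2, ev T ∈ P := by
    rintro T (⟨u, rfl⟩ | ⟨a, b, rfl⟩)
    · rw [hPmem]
      intro w hw
      show tauB (jmul u x) w = 0
      rw [hcomm u x, tassoc x u w, hxC w hw, map_zero]
    · rw [hPmem]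
      intro w hw
      have hevT : ev ⁅(jmul a : Module.End ℝ J), jmul b⁆
          = jmul a (jmul b x) - jmul b (jmul a x) := by
        rw [hevapp]
        simp [Ring.lie_def, LinearMap.sub_apply, Module.End.mul_apply]
      rw [hevT, hskew a b x w]
      have hexp : tauB x (jmul a (jmul b w) - jmul b (jmul a w))
          = ∑ m, lam m * tauB (c m) (jmul a (jmul b w) - jmul b (jmul a w)) := by
        rw [hx, map_sum, LinearMap.sum_apply]
        exact Finset.sum_congr rfl fun m _ => by
          rw [map_smul, LinearMap.smul_apply, smul_eq_mul]
      rw [hexp, Finset.sum_eq_zero, neg_zero]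
      intro m _
      by_cases hm : lam m = 0
      · rw [hm, zero_mul]
      · rw [hDw a b m hm w hw, mul_zero]
  -- G ≤ g0
  have hg0sub : G ≤ g0 := by
    intro T hT
    rw [hG, LieSubalgebra.mem_toSubmodule] at hT
    exact hGK hT
  have hGP : Submodule.map ev G ≤ P := by
    rintro z ⟨T, hT, rfl⟩
    have hTg0 : T ∈ g0 := hg0sub hT
    clear hT
    induction hTg0 using Submodule.span_induction with
    | mem T0 h0 => exact himg T0 h0
    | zero => rw [map_zero]; exact P.zero_mem
    | add T1 T2 h1 h2 ih1 ih2 => rw [map_add]; exact P.add_mem ih1 ih2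
    | smul a T1 h1 ih => rw [map_smul]; exact P.smul_mem a ih
  -- P ≤ W using Peirce decomposition and positivity
  have hPW : P ≤ W := by
    have htot := peirce_top jmul hcomm hjordan one hone c hidem horth hsum
    have htop : W ⊔ C = ⊤ := by
      refine le_antisymm le_top ?_
      rw [← htot]
      refine iSup_le fun i => iSup_le fun j => iSup_le fun hij => ?_
      by_cases hc : lam i = 0 ∧ lam j = 0
      · exact le_trans (hCle i j hij hc) le_sup_right
      · exact le_trans (hWle i j hij hc) le_sup_left
    intro z hz
    have hzC := (hPmem z).1 hz
    have hztop : z ∈ W ⊔ C := by rw [htop]; exact Submodule.mem_top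
    obtain ⟨u, hu, v, hv, huv⟩ := Submodule.mem_sup.1 hztop
    have hvv : tauB v v = 0 := by
      have h1 : tauB z v = 0 := hzC v hv
      have h2 : tauB u v = 0 := (hPmem u).1 (hWP hu) v hv
      have hz2 : tauB z v = tauB u v + tauB v v := by
        rw [← huv, map_add, LinearMap.add_apply]
      rw [h1, h2] at hz2
      linarith
    have hv0 : v = 0 := by
      by_contra hne
      have hp := hpos v hne
      rw [← htauB_eq] at hp
      linarith
    rw [← huv, hv0, add_zero]
    exact hu
  have hfin : Submodule.map ev G = W := le_antisymm (le_trans hGP hPW) hW_le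
  rw [hsetEq, hfin]
end

section
/- Let J be a finite-dimensional unital real Jordan algebra with a Jordan frame (c₁,…,c_r), let λ₁,…,λ_r ∈ ℝ, x = Σ_{k=1}^r λ_k c_k, and let u ∈ J_{ij} for some 1 ≤ i ≤ j ≤ r. Then for every v ∈ J, τ(x, u∘v) = ½ (λ_i + λ_j) τ(u, v). -/
open Finset

section JAux
variable {J : Type*} [AddCommGroup J] [Module ℝ J]

lemma jordan_polar1 (jmul : J →ₗ[ℝ] J →ₗ[ℝ] J)
    (hjordan : ∀ x y : J, jmul (jmul x y) (jmul x x) = jmul x (jmul y (jmul x x)))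
    (x z y : J) :
    jmul (jmul z y) (jmul x x) + jmul (jmul x y) (jmul x z) + jmul (jmul x y) (jmul z x)
      = jmul z (jmul y (jmul x x)) + jmul x (jmul y (jmul x z)) + jmul x (jmul y (jmul z x)) := by
  have h1 := hjordan (x + z) y
  have h2 := hjordan (x - z) y
  have h3 := hjordan z y
  simp only [map_add, map_sub, LinearMap.add_apply, LinearMap.sub_apply] at h1 h2
  linear_combination (norm := module) (2:ℝ)⁻¹ • h1 - (2:ℝ)⁻¹ • h2 - h3

lemma jordan_polar2 (jmul : J →ₗ[ℝ] J →ₗ[ℝ] J)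
    (hjordan : ∀ x y : J, jmul (jmul x y) (jmul x x) = jmul x (jmul y (jmul x x)))
    (a b z y : J) :
    jmul (jmul z y) (jmul a b) + jmul (jmul z y) (jmul b a)
      + jmul (jmul a y) (jmul b z) + jmul (jmul b y) (jmul a z)
      + jmul (jmul a y) (jmul z b) + jmul (jmul b y) (jmul z a)
      = jmul z (jmul y (jmul a b)) + jmul z (jmul y (jmul b a))
      + jmul a (jmul y (jmul b z)) + jmul b (jmul y (jmul a z))
      + jmul a (jmul y (jmul z b)) + jmul b (jmul y (jmul z a)) := by
  have h1 := jordan_polar1 jmul hjordan (a + b) z y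
  have h2 := jordan_polar1 jmul hjordan a z y
  have h3 := jordan_polar1 jmul hjordan b z y
  simp only [map_add, LinearMap.add_apply] at h1
  linear_combination (norm := module) h1 - h2 - h3

lemma jordan_opid (jmul : J →ₗ[ℝ] J →ₗ[ℝ] J)
    (hcomm : ∀ x y : J, jmul x y = jmul y x)
    (hjordan : ∀ x y : J, jmul (jmul x y) (jmul x x) = jmul x (jmul y (jmul x x)))
    (a b w : J) :
    jmul (jmul (jmul a b) w)
      = jmul (jmul a b) ∘ₗ jmul w + jmul (jmul a w) ∘ₗ jmul b + jmul (jmul b w) ∘ₗ jmul a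
        - jmul a ∘ₗ jmul w ∘ₗ jmul b - jmul b ∘ₗ jmul w ∘ₗ jmul a := by
  ext z
  simp only [LinearMap.add_apply, LinearMap.sub_apply, LinearMap.comp_apply]
  have h := jordan_polar2 jmul hjordan a b z w
  rw [hcomm b a, hcomm z b, hcomm z a] at h
  rw [hcomm (jmul (jmul a b) w) z, hcomm (jmul a b) w, hcomm (jmul a b) (jmul w z), hcomm w z]
  linear_combination (norm := module) (-(2:ℝ)⁻¹) • h

lemma jordan_keytr [Module.Finite ℝ J] [Module.Free ℝ J] (jmul : J →ₗ[ℝ] J →ₗ[ℝ] J)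
    (hcomm : ∀ x y : J, jmul x y = jmul y x)
    (hjordan : ∀ x y : J, jmul (jmul x y) (jmul x x) = jmul x (jmul y (jmul x x)))
    (a b w : J) :
    LinearMap.trace ℝ J (jmul (jmul (jmul a b) w))
      = LinearMap.trace ℝ J (jmul (jmul (jmul a w) b)) := by
  have t1 : LinearMap.trace ℝ J (jmul a ∘ₗ jmul w ∘ₗ jmul b)
      = LinearMap.trace ℝ J (jmul w ∘ₗ jmul b ∘ₗ jmul a) := by
    conv_lhs => rw [← LinearMap.comp_assoc, LinearMap.trace_comp_comm',
      ← LinearMap.comp_assoc, LinearMap.trace_comp_comm']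
  have t2 : LinearMap.trace ℝ J (jmul b ∘ₗ jmul w ∘ₗ jmul a)
      = LinearMap.trace ℝ J (jmul a ∘ₗ jmul b ∘ₗ jmul w) := by
    conv_lhs => rw [← LinearMap.comp_assoc, LinearMap.trace_comp_comm']
  rw [jordan_opid jmul hcomm hjordan a b w, jordan_opid jmul hcomm hjordan a w b]
  simp only [map_add, map_sub]
  rw [hcomm b w, t1, t2]
  ring

end JAux

/-- for `x = Σ λ_k c_k` and `u ∈ J_{ij}`, one has
`τ(x, u∘v) = ½ (λ_i + λ_j) τ(u, v)` for all `v`. -/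
theorem stmt17 (J : Type*) [AddCommGroup J] [Module ℝ J] [FiniteDimensional ℝ J]
    (jmul : J →ₗ[ℝ] J →ₗ[ℝ] J)
    (hcomm : ∀ x y : J, jmul x y = jmul y x)
    (hjordan : ∀ x y : J, jmul (jmul x y) (jmul x x) = jmul x (jmul y (jmul x x)))
    (one : J) (hone : ∀ x : J, jmul one x = x)
    (r : ℕ) (c : Fin r → J) (hframe : IsJordanFrame jmul one c)
    (lam : Fin r → ℝ) (i j : Fin r) (hij : i ≤ j)
    (u : J) (hu : u ∈ Peirce jmul c i j) :
    ∀ v : J,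
      tauF jmul (∑ k, lam k • c k) (jmul u v) =
        (1 / 2) * (lam i + lam j) * tauF jmul u v := by
  intro v
  obtain ⟨hprim, horth, hsum⟩ := hframe
  have heig : ∀ k, jmul (c k) u
      = (((if k = i then (1 : ℝ) else 0) + (if k = j then 1 else 0)) / 2) • u := by
    intro k
    simp only [Peirce, Submodule.mem_iInf, LinearMap.mem_ker, LinearMap.sub_apply,
      LinearMap.smul_apply, LinearMap.id_apply, sub_eq_zero] at hu
    exact hu k
  have hxu : jmul (∑ k, lam k • c k) u = ((1 / 2) * (lam i + lam j)) • u := by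
    rw [map_sum, LinearMap.sum_apply]
    have : ∀ k : Fin r, (jmul (lam k • c k)) u
        = ((if k = i then lam k / 2 else 0) + (if k = j then lam k / 2 else 0)) • u := by
      intro k
      rw [map_smul, LinearMap.smul_apply, heig k, smul_smul]
      congr 1
      split_ifs <;> ring
    rw [Finset.sum_congr rfl fun k _ => this k, ← Finset.sum_smul]
    congr 1
    rw [Finset.sum_add_distrib, Finset.sum_ite_eq' Finset.univ i (fun k => lam k / 2),
      Finset.sum_ite_eq' Finset.univ j (fun k => lam k / 2)]
    simp only [Finset.mem_univ, if_true]
    ring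
  unfold tauF
  rw [hcomm (∑ k, lam k • c k) (jmul u v),
    jordan_keytr jmul hcomm hjordan u v (∑ k, lam k • c k),
    hcomm u (∑ k, lam k • c k), hxu, map_smul, LinearMap.smul_apply, map_smul, map_smul,
    smul_eq_mul]
end
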